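/- arXiv:1801.02436 — 4 statements merged into one kernel-verified Lean document; each statement's English description precedes it below -/
import Mathlib

section
/- For a sequence p_i with p_i ~ c/i^α as i→∞ (c>0, α>1), the sum Σ_{i=1}^∞ (1 - e^{-p_i x}) is asymptotically equivalent to (c x)^{1/α} Γ(1 - 1/α) as x→∞. -/
open Filter Real MeasureTheory Set Topology

namespace Stmt0Aux

set_option maxHeartbeats 1000000

lemma one_sub_exp_neg_le (u : ℝ) : 1 - Real.exp (-u) ≤ u := by
  nlinarith [Real.add_one_le_exp (-u)]

lemma one_sub_exp_neg_nonneg {u : ℝ} (hu : 0 ≤ u) : 0 ≤ 1 - Real.exp (-u) := by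
  have : Real.exp (-u) ≤ 1 := Real.exp_le_one_iff.2 (by linarith)
  linarith

lemma one_sub_exp_neg_le_one (u : ℝ) : 1 - Real.exp (-u) ≤ 1 := by
  have := Real.exp_pos (-u); linarith

lemma rpow_anti {α : ℝ} (hα0 : 0 < α) {s t : ℝ} (hs : 0 < s) (hst : s ≤ t) :
    t ^ (-α) ≤ s ^ (-α) := by
  have ht : 0 < t := lt_of_lt_of_le hs hst
  rw [Real.rpow_neg hs.le, Real.rpow_neg ht.le]
  exact inv_anti₀ (Real.rpow_pos_of_pos hs _) (Real.rpow_le_rpow hs.le hst hα0.le)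

lemma aesm_parts {α : ℝ} (s : Set ℝ) (hs : MeasurableSet s) (h0 : ∀ x ∈ s, x ≠ 0) :
    AEStronglyMeasurable (fun u : ℝ => (1 - Real.exp (-u)) * u ^ (-(1/α) - 1))
      (MeasureTheory.volume.restrict s) := by
  apply ContinuousOn.aestronglyMeasurable _ hs
  apply ContinuousOn.mul
  · exact (continuous_const.sub (Real.continuous_exp.comp continuous_neg)).continuousOn
  · exact continuousOn_id.rpow_const (fun x hx => Or.inl (h0 x hx))

lemma aesm_fb {α y : ℝ} (s : Set ℝ) (hs : MeasurableSet s) (h0 : ∀ x ∈ s, x ≠ 0) :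
    AEStronglyMeasurable (fun t : ℝ => 1 - Real.exp (-(y * t ^ (-α))))
      (MeasureTheory.volume.restrict s) := by
  apply ContinuousOn.aestronglyMeasurable _ hs
  apply continuousOn_const.sub
  apply Real.continuous_exp.comp_continuousOn
  apply ContinuousOn.neg
  apply continuousOn_const.mul
  exact continuousOn_id.rpow_const (fun x hx => Or.inl (h0 x hx))

lemma integrableOn_parts {α : ℝ} (hα : 1 < α) :
    IntegrableOn (fun u : ℝ => (1 - Real.exp (-u)) * u ^ (-(1/α) - 1)) (Ioi (0:ℝ)) := by
  have hα0 : (0:ℝ) < α := by linarith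
  rw [← Ioc_union_Ioi_eq_Ioi (zero_le_one : (0:ℝ) ≤ 1)]
  apply IntegrableOn.union
  · have hint : IntegrableOn (fun u : ℝ => u ^ (-(1/α))) (Ioc (0:ℝ) 1) := by
      have h := intervalIntegral.intervalIntegrable_rpow' (a := (0:ℝ)) (b := 1)
        (r := -(1/α)) (by rw [neg_lt_neg_iff]; rw [div_lt_one hα0]; linarith)
      rwa [intervalIntegrable_iff_integrableOn_Ioc_of_le zero_le_one] at h
    refine hint.mono' (aesm_parts _ measurableSet_Ioc (fun x hx => ne_of_gt hx.1)) ?_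
    filter_upwards [ae_restrict_mem measurableSet_Ioc] with u hu
    have hu0 : (0:ℝ) < u := hu.1
    rw [Real.norm_eq_abs, abs_mul, abs_of_nonneg (one_sub_exp_neg_nonneg hu0.le),
      abs_of_nonneg (Real.rpow_nonneg hu0.le _)]
    calc (1 - Real.exp (-u)) * u ^ (-(1/α) - 1)
        ≤ u * u ^ (-(1/α) - 1) :=
          mul_le_mul_of_nonneg_right (one_sub_exp_neg_le u) (Real.rpow_nonneg hu0.le _)
      _ = u ^ (-(1/α)) := by
          rw [show u * u ^ (-(1/α) - 1) = u ^ (1:ℝ) * u ^ (-(1/α) - 1) by rw [Real.rpow_one],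
            ← Real.rpow_add hu0]
          congr 1
          ring
  · have hint : IntegrableOn (fun u : ℝ => u ^ (-(1/α) - 1)) (Ioi (1:ℝ)) :=
      integrableOn_Ioi_rpow_of_lt (by
        have : 0 < 1/α := by positivity
        linarith) one_pos
    refine hint.mono' (aesm_parts _ measurableSet_Ioi (fun x hx => ne_of_gt (lt_trans one_pos hx))) ?_
    filter_upwards [ae_restrict_mem measurableSet_Ioi] with u hu
    have hu0 : (0:ℝ) < u := lt_trans one_pos hu
    rw [Real.norm_eq_abs, abs_mul, abs_of_nonneg (one_sub_exp_neg_nonneg hu0.le),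
      abs_of_nonneg (Real.rpow_nonneg hu0.le _)]
    calc (1 - Real.exp (-u)) * u ^ (-(1/α) - 1)
        ≤ 1 * u ^ (-(1/α) - 1) :=
          mul_le_mul_of_nonneg_right (one_sub_exp_neg_le_one u) (Real.rpow_nonneg hu0.le _)
      _ = u ^ (-(1/α) - 1) := one_mul _

lemma parts_integral {α : ℝ} (hα : 1 < α) :
    ∫ u in Ioi (0:ℝ), (1/α) * ((1 - Real.exp (-u)) * u ^ (-(1/α) - 1))
      = Real.Gamma (1 - 1/α) := by
  have hα0 : (0:ℝ) < α := by linarith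
  have hβ0 : (0:ℝ) < 1/α := by positivity
  have hβ1 : 1/α < 1 := by rw [div_lt_one hα0]; linarith
  set H : ℝ → ℝ := fun u => -((1 - Real.exp (-u)) * u ^ (-(1/α))) with hH
  set F : ℝ → ℝ := fun u =>
    (1/α) * ((1 - Real.exp (-u)) * u ^ (-(1/α) - 1)) - Real.exp (-u) * u ^ (-(1/α)) with hF
  have hG : IntegrableOn (fun u : ℝ => Real.exp (-u) * u ^ (-(1/α))) (Ioi (0:ℝ)) := by
    have := Real.GammaIntegral_convergent (s := 1 - 1/α) (by linarith)
    have e : (1 - 1/α) - 1 = -(1/α) := by ring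
    simpa [e] using this
  have hP : IntegrableOn
      (fun u : ℝ => (1/α) * ((1 - Real.exp (-u)) * u ^ (-(1/α) - 1))) (Ioi (0:ℝ)) :=
    (integrableOn_parts hα).const_mul _
  have hFint : IntegrableOn F (Ioi (0:ℝ)) := hP.sub hG
  have hderiv : ∀ u ∈ Ioi (0:ℝ), HasDerivAt H (F u) u := by
    intro u hu
    have hu0 : (0:ℝ) < u := hu
    have h1 : HasDerivAt (fun u : ℝ => 1 - Real.exp (-u)) (Real.exp (-u)) u := by
      simpa using ((Real.hasDerivAt_exp (-u)).comp u (hasDerivAt_neg u)).const_sub 1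
    have h2 : HasDerivAt (fun u : ℝ => u ^ (-(1/α))) (-(1/α) * u ^ (-(1/α) - 1)) u :=
      Real.hasDerivAt_rpow_const (Or.inl hu0.ne')
    have h3 := (h1.mul h2).neg
    convert h3 using 1
    show (1/α) * ((1 - Real.exp (-u)) * u ^ (-(1/α) - 1)) - Real.exp (-u) * u ^ (-(1/α)) = _
    ring
    all_goals rfl
  have hb : (0:ℝ) < 1 - 1/α := by linarith
  have hcont : ContinuousWithinAt H (Ici (0:ℝ)) 0 := by
    have hH0 : H 0 = 0 := by simp [hH]
    rw [ContinuousWithinAt, hH0]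
    have hneg : Tendsto (fun u : ℝ => -H u) (nhdsWithin 0 (Ici (0:ℝ))) (𝓝 0) := by
      apply squeeze_zero' (g := fun u : ℝ => u ^ (1 - 1/α))
      · filter_upwards [self_mem_nhdsWithin] with u hu
        rcases eq_or_lt_of_le (mem_Ici.1 hu) with h | h
        · exact le_of_eq (by rw [← h, hH0, neg_zero])
        · exact neg_nonneg.2 (neg_nonpos.2 (mul_nonneg
            (one_sub_exp_neg_nonneg h.le) (Real.rpow_nonneg h.le _)))
      · filter_upwards [self_mem_nhdsWithin] with u hu
        rcases eq_or_lt_of_le (mem_Ici.1 hu) with h | h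
        · rw [← h, hH0, neg_zero]
          exact Real.rpow_nonneg le_rfl _
        · rw [hH, neg_neg]
          calc (1 - Real.exp (-u)) * u ^ (-(1/α))
              ≤ u * u ^ (-(1/α)) :=
                mul_le_mul_of_nonneg_right (one_sub_exp_neg_le u) (Real.rpow_nonneg h.le _)
            _ = u ^ (1 - 1/α) := by
                rw [show (1:ℝ) - 1/α = 1 + -(1/α) by ring, Real.rpow_add h, Real.rpow_one]
      · have hcont2 : ContinuousAt (fun u : ℝ => u ^ (1 - 1/α)) 0 :=
          Real.continuousAt_rpow_const 0 _ (Or.inr hb.le)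
        have h4 : Tendsto (fun u : ℝ => u ^ (1 - 1/α)) (nhdsWithin 0 (Ici (0:ℝ)))
            (𝓝 ((0:ℝ) ^ ((1:ℝ) - 1/α))) := hcont2.continuousWithinAt
        rw [Real.zero_rpow hb.ne'] at h4
        exact h4
    simpa using hneg.neg
  have htop : Tendsto H atTop (𝓝 0) := by
    have h1 : Tendsto (fun u : ℝ => 1 - Real.exp (-u)) atTop (𝓝 1) := by
      simpa using (tendsto_const_nhds (x := (1:ℝ))).sub
        (Real.tendsto_exp_neg_atTop_nhds_zero)
    have h2 : Tendsto (fun u : ℝ => u ^ (-(1/α))) atTop (𝓝 0) :=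
      tendsto_rpow_neg_atTop (by positivity)
    rw [hH]
    simpa using (h1.mul h2).neg
  have key := integral_Ioi_of_hasDerivAt_of_tendsto hcont hderiv hFint htop
  have hH0 : H 0 = 0 := by simp [hH]
  rw [hH0, sub_zero] at key
  have hsplit : ∫ u in Ioi (0:ℝ), F u =
      (∫ u in Ioi (0:ℝ), (1/α) * ((1 - Real.exp (-u)) * u ^ (-(1/α) - 1)))
        - ∫ u in Ioi (0:ℝ), Real.exp (-u) * u ^ (-(1/α)) :=
    integral_sub hP hG
  have hGam : Real.Gamma (1 - 1/α) = ∫ u in Ioi (0:ℝ), Real.exp (-u) * u ^ (-(1/α)) := by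
    rw [Real.Gamma_eq_integral (by linarith)]
    congr 1
    ext u
    congr 1
    ring
  rw [key] at hsplit
  rw [hGam]
  linarith [hsplit.symm]

lemma integral_one_sub_exp_rpow {α : ℝ} (hα : 1 < α) :
    ∫ s in Ioi (0:ℝ), (1 - Real.exp (-(s ^ (-α)))) = Real.Gamma (1 - 1/α) := by
  have hα0 : (0:ℝ) < α := by linarith
  have h := integral_comp_rpow_Ioi
    (fun u : ℝ => (1/α) * ((1 - Real.exp (-u)) * u ^ (-(1/α) - 1)))
    (p := -α) (by simpa using hα0.ne')
  rw [← parts_integral hα, ← h]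
  apply setIntegral_congr_fun measurableSet_Ioi
  intro s hs
  have hs0 : (0:ℝ) < s := hs
  have e1 : (s ^ (-α)) ^ (-(1/α) - 1) = s ^ (α + 1) := by
    rw [← Real.rpow_mul hs0.le]
    congr 1
    field_simp
    ring
  have e2 : s ^ (-α - 1) * s ^ (α + 1) = 1 := by
    rw [← Real.rpow_add hs0]
    norm_num
  have e3 : |(-α)| = α := by rw [abs_neg, abs_of_pos hα0]
  simp only [smul_eq_mul, e1, e3]
  have : α * s ^ (-α - 1) * ((1/α) * ((1 - Real.exp (-(s ^ (-α)))) * s ^ (α + 1)))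
      = (α * (1/α)) * ((s ^ (-α - 1) * s ^ (α + 1)) * (1 - Real.exp (-(s ^ (-α))))) := by
    ring
  rw [this, e2, mul_one_div_cancel hα0.ne', one_mul, one_mul]

lemma integral_one_sub_exp_scaled {α : ℝ} (hα : 1 < α) {y : ℝ} (hy : 0 < y) :
    ∫ t in Ioi (0:ℝ), (1 - Real.exp (-(y * t ^ (-α))))
      = y ^ (1/α) * Real.Gamma (1 - 1/α) := by
  have hb : (0:ℝ) < y ^ (-(1/α)) := Real.rpow_pos_of_pos hy _
  have h := integral_comp_mul_left_Ioi (fun s : ℝ => 1 - Real.exp (-(s ^ (-α)))) 0 hb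
  rw [mul_zero] at h
  have e : ∀ t ∈ Ioi (0:ℝ),
      (1 - Real.exp (-(y * t ^ (-α))))
        = (fun t : ℝ => 1 - Real.exp (-((y ^ (-(1/α)) * t) ^ (-α)))) t := by
    intro t ht
    have ht0 : (0:ℝ) < t := ht
    have : (y ^ (-(1/α)) * t) ^ (-α) = y * t ^ (-α) := by
      rw [Real.mul_rpow hb.le ht0.le, ← Real.rpow_mul hy.le]
      congr 1
      field_simp
      simp
    show 1 - Real.exp (-(y * t ^ (-α))) = 1 - Real.exp (-((y ^ (-(1/α)) * t) ^ (-α)))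
    rw [this]
  calc ∫ t in Ioi (0:ℝ), (1 - Real.exp (-(y * t ^ (-α))))
      = ∫ t in Ioi (0:ℝ), (1 - Real.exp (-((y ^ (-(1/α)) * t) ^ (-α)))) :=
        setIntegral_congr_fun measurableSet_Ioi e
    _ = (y ^ (-(1/α)))⁻¹ • ∫ s in Ioi (0:ℝ), (1 - Real.exp (-(s ^ (-α)))) := h
    _ = y ^ (1/α) * Real.Gamma (1 - 1/α) := by
        rw [integral_one_sub_exp_rpow hα, smul_eq_mul, ← Real.rpow_neg hy.le, neg_neg]

lemma integrableOn_fb {α : ℝ} (hα : 1 < α) {y : ℝ} (hy : 0 < y) :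
    IntegrableOn (fun t : ℝ => 1 - Real.exp (-(y * t ^ (-α)))) (Ioi (0:ℝ)) := by
  rw [← Ioc_union_Ioi_eq_Ioi (zero_le_one : (0:ℝ) ≤ 1)]
  apply IntegrableOn.union
  · refine Integrable.mono' (g := fun _ : ℝ => (1:ℝ))
      (integrableOn_const measure_Ioc_lt_top.ne)
      (aesm_fb _ measurableSet_Ioc (fun x hx => ne_of_gt hx.1)) ?_
    filter_upwards [ae_restrict_mem measurableSet_Ioc] with t ht
    have h0 : 0 ≤ y * t ^ (-α) := mul_nonneg hy.le (Real.rpow_nonneg ht.1.le _)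
    rw [Real.norm_eq_abs, abs_of_nonneg (one_sub_exp_neg_nonneg h0)]
    exact one_sub_exp_neg_le_one _
  · have hint : IntegrableOn (fun t : ℝ => y * t ^ (-α)) (Ioi (1:ℝ)) :=
      (integrableOn_Ioi_rpow_of_lt (by linarith) one_pos).const_mul y
    refine hint.mono' (aesm_fb _ measurableSet_Ioi (fun x hx => ne_of_gt (lt_trans one_pos hx))) ?_
    filter_upwards [ae_restrict_mem measurableSet_Ioi] with t ht
    have ht0 : (0:ℝ) < t := lt_trans one_pos ht
    have h0 : 0 ≤ y * t ^ (-α) := mul_nonneg hy.le (Real.rpow_nonneg ht0.le _)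
    rw [Real.norm_eq_abs, abs_of_nonneg (one_sub_exp_neg_nonneg h0)]
    exact one_sub_exp_neg_le _

lemma fb_antitone {α : ℝ} (hα : 1 < α) {y : ℝ} (hy : 0 < y) :
    AntitoneOn (fun t : ℝ => 1 - Real.exp (-(y * t ^ (-α)))) (Ioi (0:ℝ)) := by
  intro s hs t ht hst
  have hs0 : (0:ℝ) < s := hs
  have harg : y * t ^ (-α) ≤ y * s ^ (-α) :=
    mul_le_mul_of_nonneg_left (rpow_anti (by linarith) hs0 hst) hy.le
  have h2 := Real.exp_le_exp.2 (neg_le_neg harg)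
  show 1 - Real.exp (-(y * t ^ (-α))) ≤ 1 - Real.exp (-(y * s ^ (-α)))
  linarith

lemma fb_nonneg {α y : ℝ} (hy : 0 ≤ y) (t : ℝ) (ht : 0 ≤ t) :
    0 ≤ 1 - Real.exp (-(y * t ^ (-α))) :=
  one_sub_exp_neg_nonneg (mul_nonneg hy (Real.rpow_nonneg ht _))

lemma integral_le_tsum_nat (f : ℝ → ℝ) (N : ℕ) (hN : 1 ≤ N)
    (hanti : AntitoneOn f (Ioi (0:ℝ))) (hnn : ∀ t : ℝ, 0 < t → 0 ≤ f t)
    (hint : IntegrableOn f (Ioi (0:ℝ)))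
    (hsum : Summable fun i : ℕ => f ((N + i : ℕ) : ℝ)) :
    ∫ t in Ioi ((N:ℝ)), f t ≤ ∑' i : ℕ, f ((N + i : ℕ) : ℝ) := by
  have hN0 : (0:ℝ) < (N:ℝ) := by exact_mod_cast hN
  have hintN : IntegrableOn f (Ioi ((N:ℝ))) := hint.mono_set (Ioi_subset_Ioi hN0.le)
  have htends : Tendsto (fun n : ℕ => ∫ x in (N:ℝ)..((N:ℝ)+n), f x) atTop
      (𝓝 (∫ t in Ioi ((N:ℝ)), f t)) :=
    intervalIntegral_tendsto_integral_Ioi _ hintN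
      (tendsto_atTop_add_const_left _ _ tendsto_natCast_atTop_atTop)
  refine le_of_tendsto htends (Eventually.of_forall fun n => ?_)
  have h1 : (∫ x in (N:ℝ)..((N:ℝ)+n), f x) ≤ ∑ i ∈ Finset.range n, f ((N:ℝ) + i) := by
    apply AntitoneOn.integral_le_sum
    exact hanti.mono (fun t ht => lt_of_lt_of_le hN0 ht.1)
  refine h1.trans ?_
  have h2 : ∑ i ∈ Finset.range n, f ((N:ℝ) + i)
      = ∑ i ∈ Finset.range n, f ((N + i : ℕ) : ℝ) := by
    refine Finset.sum_congr rfl fun i _ => ?_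
    congr 1
    push_cast
    ring
  rw [h2]
  refine Summable.sum_le_tsum _ (fun i _ => ?_) hsum
  have hpos : (0:ℝ) < ((N + i : ℕ) : ℝ) := by
    have : 0 < N + i := by omega
    exact_mod_cast this
  exact hnn _ hpos

lemma tsum_nat_le_integral (f : ℝ → ℝ) (N : ℕ) (hN : 1 ≤ N)
    (hanti : AntitoneOn f (Ioi (0:ℝ))) (hnn : ∀ t : ℝ, 0 < t → 0 ≤ f t)
    (hint : IntegrableOn f (Ioi (0:ℝ))) :
    ∑' i : ℕ, f ((N + 1 + i : ℕ) : ℝ) ≤ ∫ t in Ioi ((N:ℝ)), f t := by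
  have hN0 : (0:ℝ) < (N:ℝ) := by exact_mod_cast hN
  have hintN : IntegrableOn f (Ioi ((N:ℝ))) := hint.mono_set (Ioi_subset_Ioi hN0.le)
  refine Real.tsum_le_of_sum_range_le (fun i => ?_) (fun n => ?_)
  · have hpos : (0:ℝ) < ((N + 1 + i : ℕ) : ℝ) := by
      have : 0 < N + 1 + i := by omega
      exact_mod_cast this
    exact hnn _ hpos
  have h1 : ∑ i ∈ Finset.range n, f ((N + 1 + i : ℕ) : ℝ)
      = ∑ i ∈ Finset.range n, f ((N:ℝ) + ((i:ℕ) + 1 : ℕ)) := by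
    refine Finset.sum_congr rfl fun i _ => ?_
    congr 1
    push_cast
    ring
  rw [h1]
  have h2 : (∑ i ∈ Finset.range n, f ((N:ℝ) + ((i:ℕ) + 1 : ℕ)))
      ≤ ∫ x in (N:ℝ)..((N:ℝ)+n), f x :=
    AntitoneOn.sum_le_integral (hanti.mono (fun t ht => lt_of_lt_of_le hN0 ht.1))
  refine h2.trans ?_
  rw [intervalIntegral.integral_of_le (by linarith [Nat.cast_nonneg (α := ℝ) n] :
    (N:ℝ) ≤ (N:ℝ)+n)]
  apply setIntegral_mono_set hintN
  · filter_upwards [ae_restrict_mem measurableSet_Ioi] with t ht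
    exact hnn t (lt_trans hN0 ht)
  · exact HasSubset.Subset.eventuallyLE Ioc_subset_Ioi_self

lemma summable_fb {α y : ℝ} (hα : 1 < α) (hy : 0 < y) (g : ℕ → ℕ)
    (hg : ∀ i, i + 1 ≤ g i) :
    Summable fun i : ℕ => 1 - Real.exp (-(y * ((g i : ℕ) : ℝ) ^ (-α))) := by
  have hsum : Summable fun i : ℕ => y * (((i+1 : ℕ) : ℝ)) ^ (-α) := by
    apply Summable.mul_left
    exact (summable_nat_add_iff 1).2 (Real.summable_nat_rpow.2 (by linarith))
  apply Summable.of_nonneg_of_le _ _ hsum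
  · intro i
    exact fb_nonneg hy.le _ (Nat.cast_nonneg _)
  · intro i
    refine (one_sub_exp_neg_le _).trans ?_
    refine mul_le_mul_of_nonneg_left ?_ hy.le
    apply rpow_anti (by linarith)
    · exact_mod_cast Nat.succ_pos i
    · exact_mod_cast hg i

end Stmt0Aux

open Stmt0Aux

set_option maxHeartbeats 2000000

/-- If `p i ~ c / i^α` (`c > 0`, `α > 1`), with `p i > 0`, then
`∑_{i=1}^∞ (1 - e^{-p_i x}) ~ (c x)^{1/α} Γ(1 - 1/α)` as `x → ∞`. -/
theorem stmt0 (c α : ℝ) (hc : 0 < c) (hα : 1 < α) (p : ℕ → ℝ)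
    (hp : ∀ i, 1 ≤ i → 0 < p i)
    (hasymp : Tendsto (fun i : ℕ => p i * (i : ℝ) ^ α) atTop (nhds c)) :
    Tendsto (fun x : ℝ =>
        (∑' i : ℕ, (1 - Real.exp (-(p (i + 1)) * x))) /
          ((c * x) ^ (1 / α) * Real.Gamma (1 - 1 / α)))
      atTop (nhds 1) := by
  have hα0 : (0:ℝ) < α := by linarith
  have hβ0 : (0:ℝ) < 1/α := by positivity
  have hβ1 : 1/α < 1 := by rw [div_lt_one hα0]; linarith
  have hΓ : 0 < Real.Gamma (1 - 1/α) := Real.Gamma_pos_of_pos (by linarith)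
  have hDtop : Tendsto (fun x : ℝ => (c*x) ^ (1/α) * Real.Gamma (1 - 1/α)) atTop atTop := by
    apply Tendsto.atTop_mul_const hΓ
    exact (tendsto_rpow_atTop hβ0).comp (Tendsto.const_mul_atTop hc tendsto_id)
  obtain ⟨N₀', hN₀'⟩ : ∃ N₀ : ℕ, ∀ i ≥ N₀, p i * (i:ℝ)^α ≤ c + 1 :=
    eventually_atTop.1 (hasymp.eventually (eventually_le_nhds (lt_add_one c)))
  have hple : ∀ i : ℕ, 1 ≤ i → N₀' ≤ i → p i ≤ (c+1) * (i:ℝ)^(-α) := by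
    intro i h1 h2
    have hi0 : (0:ℝ) < (i:ℝ) := by exact_mod_cast h1
    have hia : (0:ℝ) < (i:ℝ)^α := Real.rpow_pos_of_pos hi0 _
    rw [Real.rpow_neg hi0.le, ← div_eq_mul_inv, le_div_iff₀ hia]
    exact hN₀' i h2
  have hSummable : ∀ x : ℝ, 0 ≤ x →
      Summable (fun i : ℕ => 1 - Real.exp (-(p (i+1)) * x)) := by
    intro x hx
    set K₁ := max N₀' 1 with hK₁
    have hN₀K : N₀' ≤ K₁ := le_max_left _ _
    rw [← summable_nat_add_iff K₁]
    have hbase : Summable (fun n : ℕ => ((n:ℝ))^(-α)) :=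
      Real.summable_nat_rpow.2 (by linarith)
    have hs1 : Summable (fun n : ℕ => (((n + (K₁+1) : ℕ)):ℝ)^(-α)) :=
      (summable_nat_add_iff (f := fun n : ℕ => ((n:ℝ))^(-α)) (K₁+1)).2 hbase
    have hs2 : Summable (fun n : ℕ => (c+1) * ((((n + K₁ + 1 : ℕ)):ℝ)^(-α)) * x) := by
      have := (hs1.mul_left (c+1)).mul_right x
      apply this.congr
      intro i
      norm_num [Nat.add_assoc]
    apply Summable.of_nonneg_of_le _ _ hs2
    · intro i
      have hp' := hp (i + K₁ + 1) (by omega)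
      have harg : -(p (i+K₁+1)) * x ≤ 0 := by nlinarith
      have := Real.exp_le_one_iff.2 harg
      linarith
    · intro i
      have hj1 : 1 ≤ i + K₁ + 1 := by omega
      have hj2 : N₀' ≤ i + K₁ + 1 := by omega
      calc 1 - Real.exp (-(p (i+K₁+1)) * x) ≤ p (i+K₁+1) * x := by
            rw [neg_mul]
            exact one_sub_exp_neg_le _
        _ ≤ (c+1) * (((i+K₁+1 : ℕ)):ℝ)^(-α) * x :=
            mul_le_mul_of_nonneg_right (hple _ hj1 hj2) hx
  rw [Metric.tendsto_nhds]
  intro ε hε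
  set δ : ℝ := min (ε/4) (1/2) with hδdef
  have hδ0 : 0 < δ := lt_min (by linarith) (by norm_num)
  have hδε : δ ≤ ε/4 := min_le_left _ _
  have hδhalf : δ ≤ 1/2 := min_le_right _ _
  have h1δ : (0:ℝ) < 1 - δ := by linarith
  have hub : (1+δ) ^ ((1:ℝ)/α) ≤ 1 + ε/4 := by
    have h1 : (1+δ) ^ ((1:ℝ)/α) ≤ (1+δ) ^ (1:ℝ) :=
      Real.rpow_le_rpow_of_exponent_le (by linarith) (by linarith)
    rw [Real.rpow_one] at h1; linarith
  have hlb : 1 - ε/4 ≤ (1-δ) ^ ((1:ℝ)/α) := by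
    have h1 : (1-δ) ^ (1:ℝ) ≤ (1-δ) ^ ((1:ℝ)/α) :=
      Real.rpow_le_rpow_of_exponent_ge h1δ (by linarith) (by linarith)
    rw [Real.rpow_one] at h1; linarith
  obtain ⟨N₀, hN₀⟩ := Metric.tendsto_atTop.1 hasymp (δ * c) (by positivity)
  set K := max N₀ 1 with hK
  have hK1 : 1 ≤ K := le_max_right _ _
  have hbound : ∀ j : ℕ, K ≤ j →
      ((1-δ)*c) * (j:ℝ)^(-α) ≤ p j ∧ p j ≤ ((1+δ)*c) * (j:ℝ)^(-α) := by
    intro j hj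
    have hj1 : 1 ≤ j := le_trans hK1 hj
    have hj0 : (0:ℝ) < (j:ℝ) := by exact_mod_cast hj1
    have hja : (0:ℝ) < (j:ℝ)^α := Real.rpow_pos_of_pos hj0 _
    have hd := hN₀ j (le_trans (le_max_left _ _) hj)
    rw [Real.dist_eq, abs_sub_lt_iff] at hd
    constructor
    · rw [Real.rpow_neg hj0.le, ← div_eq_mul_inv, div_le_iff₀ hja]
      nlinarith [hd.2]
    · rw [Real.rpow_neg hj0.le, ← div_eq_mul_inv, le_div_iff₀ hja]
      nlinarith [hd.1]
  filter_upwards [eventually_ge_atTop (1:ℝ),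
    hDtop.eventually_ge_atTop (((K:ℝ)+2) * (4/ε) + 1)] with x hx1 hx2
  have hx0 : (0:ℝ) < x := by linarith
  have hD0 : 0 < (c*x) ^ ((1:ℝ)/α) * Real.Gamma (1 - 1/α) := by positivity
  set D := (c*x) ^ ((1:ℝ)/α) * Real.Gamma (1 - 1/α) with hDdef
  have hsumm := hSummable x hx0.le
  set S := ∑' i : ℕ, (1 - Real.exp (-(p (i + 1)) * x)) with hSdef
  have hsplit := (Summable.sum_add_tsum_nat_add
    (f := fun i : ℕ => 1 - Real.exp (-(p (i + 1)) * x)) K hsumm).symm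
  have hhead_le : ∑ i ∈ Finset.range K, (1 - Real.exp (-(p (i + 1)) * x)) ≤ (K:ℝ) := by
    calc ∑ i ∈ Finset.range K, (1 - Real.exp (-(p (i + 1)) * x))
        ≤ ∑ _i ∈ Finset.range K, (1:ℝ) := Finset.sum_le_sum (fun i _ => by
          have := Real.exp_pos (-(p (i + 1)) * x); linarith)
      _ = (K:ℝ) := by simp
  have hhead_ge : (0:ℝ) ≤ ∑ i ∈ Finset.range K, (1 - Real.exp (-(p (i + 1)) * x)) := by
    apply Finset.sum_nonneg
    intro i _
    have hp' := hp (i+1) (by omega)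
    have harg : -(p (i+1)) * x ≤ 0 := by nlinarith
    have := Real.exp_le_one_iff.2 harg
    linarith
  have hyP : (0:ℝ) < (1+δ)*c*x := by positivity
  have hyM : (0:ℝ) < (1-δ)*c*x := mul_pos (mul_pos h1δ hc) hx0
  set fbp : ℝ → ℝ := fun t => 1 - Real.exp (-(((1+δ)*c*x) * t^(-α))) with hfbp
  set fbm : ℝ → ℝ := fun t => 1 - Real.exp (-(((1-δ)*c*x) * t^(-α))) with hfbm
  have htailterm : ∀ i : ℕ,
      fbm (((K + 1 + i : ℕ)):ℝ) ≤ 1 - Real.exp (-(p (K + 1 + i)) * x)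
      ∧ 1 - Real.exp (-(p (K + 1 + i)) * x) ≤ fbp (((K + 1 + i : ℕ)):ℝ) := by
    intro i
    have hj := hbound (K+1+i) (by omega)
    have hj0 : (0:ℝ) ≤ ((K+1+i:ℕ):ℝ)^(-α) := Real.rpow_nonneg (Nat.cast_nonneg _) _
    have e1 : ((1-δ)*c*x) * ((K+1+i:ℕ):ℝ)^(-α) = ((1-δ)*c*((K+1+i:ℕ):ℝ)^(-α))*x := by ring
    have e2 : ((1+δ)*c*x) * ((K+1+i:ℕ):ℝ)^(-α) = ((1+δ)*c*((K+1+i:ℕ):ℝ)^(-α))*x := by ring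
    constructor
    · show 1 - Real.exp (-(((1-δ)*c*x) * ((K+1+i:ℕ):ℝ)^(-α))) ≤ _
      have h1 : ((1-δ)*c*x) * ((K+1+i:ℕ):ℝ)^(-α) ≤ p (K+1+i) * x := by
        rw [e1]
        exact mul_le_mul_of_nonneg_right hj.1 hx0.le
      have h2 := Real.exp_le_exp.2 (neg_le_neg h1)
      rw [neg_mul]
      linarith
    · show _ ≤ 1 - Real.exp (-(((1+δ)*c*x) * ((K+1+i:ℕ):ℝ)^(-α)))
      have h1 : p (K+1+i) * x ≤ ((1+δ)*c*x) * ((K+1+i:ℕ):ℝ)^(-α) := by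
        rw [e2]
        exact mul_le_mul_of_nonneg_right hj.2 hx0.le
      have h2 := Real.exp_le_exp.2 (neg_le_neg h1)
      rw [neg_mul]
      linarith
  have htail_eq : (∑' i : ℕ, (1 - Real.exp (-(p (i + K + 1)) * x)))
      = ∑' i : ℕ, (1 - Real.exp (-(p (K + 1 + i)) * x)) :=
    tsum_congr (fun i => by rw [show i + K + 1 = K + 1 + i from by omega])
  have hsum_tail : Summable (fun i : ℕ => 1 - Real.exp (-(p (i + K + 1)) * x)) :=
    (summable_nat_add_iff K).2 hsumm
  have hsum_tail' : Summable (fun i : ℕ => 1 - Real.exp (-(p (K + 1 + i)) * x)) :=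
    hsum_tail.congr (fun i => by rw [show i + K + 1 = K + 1 + i from by omega])
  have hsum_fbp : Summable (fun i : ℕ => fbp ((K+1+i : ℕ):ℝ)) :=
    summable_fb hα hyP _ (fun i => by omega)
  have hsum_fbm : Summable (fun i : ℕ => fbm ((K+1+i : ℕ):ℝ)) :=
    summable_fb hα hyM _ (fun i => by omega)
  have hfbp_nn : ∀ t : ℝ, 0 < t → 0 ≤ fbp t := fun t ht => fb_nonneg hyP.le t ht.le
  have hfbm_nn : ∀ t : ℝ, 0 < t → 0 ≤ fbm t := fun t ht => fb_nonneg hyM.le t ht.le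
  -- upper bound on tail
  have htail_le : (∑' i : ℕ, (1 - Real.exp (-(p (K + 1 + i)) * x)))
      ≤ ((1+δ)*c*x) ^ ((1:ℝ)/α) * Real.Gamma (1 - 1/α) := by
    have t1 : (∑' i : ℕ, (1 - Real.exp (-(p (K + 1 + i)) * x)))
        ≤ ∑' i : ℕ, fbp ((K+1+i : ℕ):ℝ) :=
      Summable.tsum_le_tsum (fun i => (htailterm i).2) hsum_tail' hsum_fbp
    have t2 : ∑' i : ℕ, fbp ((K+1+i : ℕ):ℝ) ≤ ∫ t in Ioi ((K:ℝ)), fbp t :=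
      tsum_nat_le_integral fbp K hK1 (fb_antitone hα hyP) hfbp_nn (integrableOn_fb hα hyP)
    have t3 : ∫ t in Ioi ((K:ℝ)), fbp t ≤ ∫ t in Ioi (0:ℝ), fbp t := by
      apply setIntegral_mono_set (integrableOn_fb hα hyP)
      · filter_upwards [ae_restrict_mem measurableSet_Ioi] with t ht
        exact hfbp_nn t ht
      · exact HasSubset.Subset.eventuallyLE (Ioi_subset_Ioi (Nat.cast_nonneg K))
    have t4 : ∫ t in Ioi (0:ℝ), fbp t
        = ((1+δ)*c*x) ^ ((1:ℝ)/α) * Real.Gamma (1 - 1/α) :=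
      integral_one_sub_exp_scaled hα hyP
    linarith
  -- lower bound on tail
  have htail_ge : ((1-δ)*c*x) ^ ((1:ℝ)/α) * Real.Gamma (1 - 1/α) - ((K:ℝ)+1)
      ≤ ∑' i : ℕ, (1 - Real.exp (-(p (K + 1 + i)) * x)) := by
    have t1 : ∑' i : ℕ, fbm ((K+1+i : ℕ):ℝ)
        ≤ ∑' i : ℕ, (1 - Real.exp (-(p (K + 1 + i)) * x)) :=
      Summable.tsum_le_tsum (fun i => (htailterm i).1) hsum_fbm hsum_tail'
    have t2 : ∫ t in Ioi (((K+1:ℕ)):ℝ), fbm t ≤ ∑' i : ℕ, fbm ((K+1+i : ℕ):ℝ) :=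
      integral_le_tsum_nat fbm (K+1) (by omega) (fb_antitone hα hyM) hfbm_nn
        (integrableOn_fb hα hyM) hsum_fbm
    have hM0 : (0:ℝ) ≤ ((K+1:ℕ):ℝ) := Nat.cast_nonneg _
    have hIoc_int : IntegrableOn fbm (Ioc (0:ℝ) ((K+1:ℕ):ℝ)) :=
      (integrableOn_fb hα hyM).mono_set Ioc_subset_Ioi_self
    have hIoi_int : IntegrableOn fbm (Ioi (((K+1:ℕ)):ℝ)) :=
      (integrableOn_fb hα hyM).mono_set (Ioi_subset_Ioi hM0)
    have hsplitI : (∫ t in Ioc (0:ℝ) ((K+1:ℕ):ℝ), fbm t)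
        + ∫ t in Ioi (((K+1:ℕ)):ℝ), fbm t = ∫ t in Ioi (0:ℝ), fbm t := by
      rw [← setIntegral_union (Ioc_disjoint_Ioi le_rfl) measurableSet_Ioi hIoc_int hIoi_int,
        Ioc_union_Ioi_eq_Ioi hM0]
    have hIoc_le : ∫ t in Ioc (0:ℝ) ((K+1:ℕ):ℝ), fbm t ≤ (K:ℝ)+1 := by
      have hb := norm_setIntegral_le_of_norm_le_const (μ := volume)
        (s := Ioc (0:ℝ) ((K+1:ℕ):ℝ)) (C := 1) measure_Ioc_lt_top
        (f := fbm) ?_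
      · have hvol : (volume (Ioc (0:ℝ) ((K+1:ℕ):ℝ))).toReal = ((K+1:ℕ):ℝ) := by
          rw [Real.volume_Ioc, sub_zero, ENNReal.toReal_ofReal hM0]
        rw [Measure.real, hvol] at hb
        have := le_trans (le_abs_self _) hb
        rw [one_mul] at this
        refine this.trans ?_
        push_cast
        linarith
      · intro t ht
        have h0 : 0 ≤ fbm t := hfbm_nn t ht.1
        have h1 : fbm t ≤ 1 := one_sub_exp_neg_le_one _
        rw [Real.norm_eq_abs, abs_of_nonneg h0]
        exact h1
    have t4 : ∫ t in Ioi (0:ℝ), fbm t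
        = ((1-δ)*c*x) ^ ((1:ℝ)/α) * Real.Gamma (1 - 1/α) :=
      integral_one_sub_exp_scaled hα hyM
    linarith
  -- put it together
  have hrpow_p : ((1+δ)*c*x) ^ ((1:ℝ)/α) = (1+δ) ^ ((1:ℝ)/α) * (c*x) ^ ((1:ℝ)/α) := by
    rw [mul_assoc, Real.mul_rpow (by linarith) (by positivity)]
  have hrpow_m : ((1-δ)*c*x) ^ ((1:ℝ)/α) = (1-δ) ^ ((1:ℝ)/α) * (c*x) ^ ((1:ℝ)/α) := by
    rw [mul_assoc, Real.mul_rpow (by linarith) (by positivity)]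
  have hS_le : S ≤ (K:ℝ) + (1+δ) ^ ((1:ℝ)/α) * D := by
    rw [hSdef, hsplit, htail_eq]
    have := htail_le
    rw [hrpow_p, mul_assoc] at this
    rw [hDdef]
    linarith
  have hS_ge : (1-δ) ^ ((1:ℝ)/α) * D - ((K:ℝ)+1) ≤ S := by
    rw [hSdef, hsplit, htail_eq]
    have := htail_ge
    rw [hrpow_m, mul_assoc] at this
    rw [hDdef]
    linarith
  have hKD : ((K:ℝ)+1)/D ≤ ε/4 := by
    rw [div_le_iff₀ hD0]
    have hx2' : ((K:ℝ)+2) * (4/ε) ≤ D := by linarith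
    have e1 : ((K:ℝ)+2) * (4/ε) * (ε/4) = (K:ℝ)+2 := by
      field_simp
    nlinarith [mul_le_mul_of_nonneg_right hx2' (by positivity : (0:ℝ) ≤ ε/4)]
  have hKD' : (K:ℝ)/D ≤ ε/4 := by
    refine le_trans ?_ hKD
    apply div_le_div_of_nonneg_right ?_ hD0.le
    · linarith
  have hup : S / D ≤ 1 + ε/2 := by
    have h1 : S / D ≤ ((K:ℝ) + (1+δ) ^ ((1:ℝ)/α) * D) / D :=
      div_le_div_of_nonneg_right hS_le hD0.le
    rw [add_div, mul_div_assoc, div_self hD0.ne', mul_one] at h1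
    linarith
  have hlow : 1 - ε/2 ≤ S / D := by
    have h1 : ((1-δ) ^ ((1:ℝ)/α) * D - ((K:ℝ)+1)) / D ≤ S / D :=
      div_le_div_of_nonneg_right hS_ge hD0.le
    rw [sub_div, mul_div_assoc, div_self hD0.ne', mul_one] at h1
    linarith
  rw [Real.dist_eq, abs_sub_lt_iff]
  constructor <;> [linarith; linarith]
end

section
/- Fix α > 1, c > 0, μ ∈ (0,1]. Let (X_i)_{i≥1} be i.i.d. Bernoulli(μ), q_i = c·i^{-α}, Z_i = q_i X_i, and Y_n = Σ_{i=n}^∞ Z_i. Then there exist n₀ ∈ ℕ and c₀ > 0 such that for all n > n₀, P[ for all k ≥ n, |Y_k − E[Y_k]| < k^{-(α − 2/3)} ] > 1 − c₀/n². -/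
open MeasureTheory ProbabilityTheory Real

open Filter Topology
open scoped ENNReal NNReal

lemma aux_bern {b t : ℝ} (hb : 0 ≤ b) (ht0 : 0 ≤ t) (ht1 : t < 1) :
    (1 + b * t) * (1 - t) ^ b ≤ 1 := by
  have h1 : (0:ℝ) < 1 - t := by linarith
  have h2 : (1 - t) ^ b ≤ Real.exp (-(b * t)) := by
    rw [Real.rpow_def_of_pos h1]
    apply Real.exp_le_exp.2
    have hl := Real.log_le_sub_one_of_pos h1
    nlinarith
  have h3 : 1 + b * t ≤ Real.exp (b * t) := by
    have := Real.add_one_le_exp (b * t); linarith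
  calc (1 + b * t) * (1 - t) ^ b ≤ Real.exp (b * t) * Real.exp (-(b * t)) := by
        apply mul_le_mul h3 h2 (Real.rpow_nonneg h1.le b) (Real.exp_nonneg _)
    _ = 1 := by rw [← Real.exp_add]; simp

lemma aux_step {p : ℝ} (hp : 1 < p) {m : ℕ} (hm : 1 ≤ m) :
    (p - 1) * ((m:ℝ) + 1) ^ (-p) ≤ (m:ℝ) ^ (1-p) - ((m:ℝ) + 1) ^ (1-p) := by
  have hm0 : (0:ℝ) < m := by exact_mod_cast hm
  have hm1 : (0:ℝ) < (m:ℝ) + 1 := by linarith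
  set b : ℝ := p - 1 with hbdef
  have hb : 0 < b := by rw [hbdef]; linarith
  set t : ℝ := 1 / ((m:ℝ) + 1) with htdef
  have ht0 : 0 < t := by positivity
  have ht1 : t < 1 := by rw [htdef, div_lt_one hm1]; linarith
  have h1t : (0:ℝ) < 1 - t := by linarith
  have hmt : (m:ℝ) = ((m:ℝ) + 1) * (1 - t) := by rw [htdef]; field_simp; ring
  have hpow : (0:ℝ) < (1 - t) ^ b := Real.rpow_pos_of_pos h1t b
  have key : 1 + b * t ≤ (1 - t) ^ (-b) := by
    have h := aux_bern hb.le ht0.le ht1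
    rw [Real.rpow_neg h1t.le]
    nlinarith [mul_inv_cancel₀ hpow.ne', inv_nonneg.2 hpow.le,
      mul_le_mul_of_nonneg_right h (inv_nonneg.2 hpow.le)]
  have e1 : (m:ℝ) ^ (1-p) = ((m:ℝ)+1) ^ (-b) * (1-t) ^ (-b) := by
    rw [show (1-p : ℝ) = -b by rw [hbdef]; ring]
    conv_lhs => rw [hmt]
    rw [Real.mul_rpow hm1.le h1t.le]
  have e2 : ((m:ℝ)+1) ^ (1-p) = ((m:ℝ)+1) ^ (-b) := by
    rw [show (1-p : ℝ) = -b by rw [hbdef]; ring]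
  have e3 : ((m:ℝ)+1) ^ (-p) = ((m:ℝ)+1) ^ (-b) * t := by
    rw [show (-p : ℝ) = -b + (-1) by rw [hbdef]; ring, Real.rpow_add hm1,
      Real.rpow_neg_one, htdef, one_div]
  have hQ : (0:ℝ) < ((m:ℝ)+1) ^ (-b) := Real.rpow_pos_of_pos hm1 _
  rw [e1, e2, e3]
  nlinarith [mul_le_mul_of_nonneg_left key hQ.le]

lemma aux_tail {p : ℝ} (hp : 1 < p) (k : ℕ) (hk : 1 ≤ k) :
    ∑' j : ℕ, ((k + j : ℕ) : ℝ) ^ (-p) ≤ (1 + 1/(p-1)) * (k:ℝ) ^ (1-p) := by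
  have hk0 : (0:ℝ) < k := by exact_mod_cast hk
  have hk1 : (1:ℝ) ≤ k := by exact_mod_cast hk
  have hp1 : (0:ℝ) < p - 1 := by linarith
  have hsum0 : Summable (fun n : ℕ => ((n:ℝ)) ^ (-p)) :=
    Real.summable_nat_rpow.2 (by linarith)
  have hsum : Summable (fun j : ℕ => ((k + j : ℕ) : ℝ) ^ (-p)) := by
    have := (summable_nat_add_iff (f := fun n : ℕ => ((n:ℝ)) ^ (-p)) k).2 hsum0
    exact this.congr (fun j => by rw [Nat.add_comm])
  rw [Summable.tsum_eq_zero_add hsum]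
  have hfirst : ((k + 0 : ℕ) : ℝ) ^ (-p) ≤ (k:ℝ) ^ (1-p) := by
    simp only [Nat.add_zero]
    exact Real.rpow_le_rpow_of_exponent_le hk1 (by linarith)
  have htail : ∑' j : ℕ, ((k + (j + 1) : ℕ) : ℝ) ^ (-p) ≤ (1/(p-1)) * (k:ℝ) ^ (1-p) := by
    apply Real.tsum_le_of_sum_range_le (fun n => by positivity)
    intro N
    have hterm : ∀ j : ℕ, ((k + (j + 1) : ℕ) : ℝ) ^ (-p)
        ≤ (1/(p-1)) * (((k + j : ℕ) : ℝ) ^ (1-p) - ((k + (j+1) : ℕ) : ℝ) ^ (1-p)) := by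
      intro j
      have hkj : 1 ≤ k + j := le_add_right hk
      have hstep := aux_step hp hkj
      have hc : ((k + (j + 1) : ℕ) : ℝ) = ((k + j : ℕ) : ℝ) + 1 := by push_cast; ring
      rw [hc]
      calc ((k + j : ℕ) + 1 : ℝ) ^ (-p)
          = (1/(p-1)) * ((p-1) * (((k + j : ℕ) : ℝ) + 1) ^ (-p)) := by field_simp
        _ ≤ (1/(p-1)) * (((k + j : ℕ) : ℝ) ^ (1-p) - (((k + j : ℕ) : ℝ) + 1) ^ (1-p)) := by
            apply mul_le_mul_of_nonneg_left hstep (by positivity)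
    calc ∑ j ∈ Finset.range N, ((k + (j + 1) : ℕ) : ℝ) ^ (-p)
        ≤ ∑ j ∈ Finset.range N, (1/(p-1)) *
            (((k + j : ℕ) : ℝ) ^ (1-p) - ((k + (j+1) : ℕ) : ℝ) ^ (1-p)) :=
          Finset.sum_le_sum (fun j _ => hterm j)
      _ = (1/(p-1)) * (((k + 0 : ℕ) : ℝ) ^ (1-p) - ((k + N : ℕ) : ℝ) ^ (1-p)) := by
          rw [← Finset.mul_sum, Finset.sum_range_sub' (f := fun j => ((k + j : ℕ) : ℝ) ^ (1-p))]
      _ ≤ (1/(p-1)) * (k:ℝ) ^ (1-p) := by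
          apply mul_le_mul_of_nonneg_left _ (by positivity)
          simp only [Nat.add_zero]
          have : (0:ℝ) ≤ ((k + N : ℕ) : ℝ) ^ (1-p) := by positivity
          linarith
  linarith

lemma aux_exp_quad {u : ℝ} (hu : |u| ≤ 1) : Real.exp u ≤ 1 + u + u^2 := by
  have h := Real.exp_bound hu (by norm_num : 0 < 2)
  norm_num [Nat.factorial] at h
  simp only [Finset.sum_range_succ, Finset.sum_range_zero] at h
  have h2 := (abs_le.1 h).2
  norm_num at h2
  nlinarith [sq_abs u, sq_nonneg u]

lemma aux_integrable_of_bounded {Ω : Type*} [MeasureSpace Ω]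
    [IsFiniteMeasure (ℙ : Measure Ω)] {f : Ω → ℝ} (hf : Measurable f) (C : ℝ)
    (h : ∀ ω, |f ω| ≤ C) : Integrable f (ℙ : Measure Ω) :=
  ⟨hf.aestronglyMeasurable, HasFiniteIntegral.of_bounded (C := C) (ae_of_all _ h)⟩

lemma aux_mgf_bernoulli {Ω : Type*} [MeasureSpace Ω] [IsProbabilityMeasure (ℙ : Measure Ω)]
    {Xi : Ω → ℝ} (hm : Measurable Xi) (h01 : ∀ ω, Xi ω = 0 ∨ Xi ω = 1)
    {μm : ℝ} (hμ0 : 0 ≤ μm) (hμ1 : μm ≤ 1) (hE : ∫ ω, Xi ω ∂(ℙ : Measure Ω) = μm)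
    {qi l : ℝ} (hu : |l * qi| ≤ 1) :
    mgf (fun ω => qi * Xi ω - qi * μm) (ℙ : Measure Ω) l ≤ Real.exp ((l*qi)^2) := by
  set u : ℝ := l * qi with hudef
  have hXi_int : Integrable Xi (ℙ : Measure Ω) := by
    apply aux_integrable_of_bounded hm 1
    intro ω; rcases h01 ω with h | h <;> simp [h]
  have hpt : ∀ ω, Real.exp (l * (qi * Xi ω - qi * μm))
      = (1 + (Real.exp u - 1) * Xi ω) * Real.exp (-(u * μm)) := by
    intro ω
    rcases h01 ω with h | h
    · have he : l * (qi * Xi ω - qi * μm) = -(u * μm) := by rw [h, hudef]; ring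
      rw [he, h]; ring
    · have he : l * (qi * Xi ω - qi * μm) = u + -(u * μm) := by rw [h, hudef]; ring
      rw [he, Real.exp_add, h]; ring
  have hmgf_eq : mgf (fun ω => qi * Xi ω - qi * μm) (ℙ : Measure Ω) l
      = (1 + (Real.exp u - 1) * μm) * Real.exp (-(u * μm)) := by
    unfold mgf
    rw [integral_congr_ae (ae_of_all _ hpt), integral_mul_const]
    congr 1
    rw [integral_add (integrable_const 1) (hXi_int.const_mul _), MeasureTheory.integral_const_mul, hE]
    simp
  rw [hmgf_eq]
  have hA0 : 0 ≤ Real.exp u - 1 - u := by have := Real.add_one_le_exp u; linarith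
  have hA2 : Real.exp u - 1 - u ≤ u^2 := by have := aux_exp_quad hu; linarith
  have h1 : 1 + (Real.exp u - 1) * μm ≤ Real.exp ((Real.exp u - 1) * μm) := by
    have := Real.add_one_le_exp ((Real.exp u - 1) * μm); linarith
  calc (1 + (Real.exp u - 1) * μm) * Real.exp (-(u * μm))
      ≤ Real.exp ((Real.exp u - 1) * μm) * Real.exp (-(u * μm)) :=
        mul_le_mul_of_nonneg_right h1 (Real.exp_nonneg _)
    _ = Real.exp ((Real.exp u - 1 - u) * μm) := by rw [← Real.exp_add]; ring_nf
    _ ≤ Real.exp (u^2) := by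
        apply Real.exp_le_exp.2
        nlinarith

lemma aux_chernoff {Ω : Type*} [MeasureSpace Ω] [IsProbabilityMeasure (ℙ : Measure Ω)]
    (W : ℕ → Ω → ℝ) (hmeas : ∀ i, Measurable (W i))
    (hindep : iIndepFun W (ℙ : Measure Ω))
    (s : Finset ℕ) (l : ℝ) (hl : 0 ≤ l) (bd : ℕ → ℝ)
    (hint : ∀ i ∈ s, Integrable (fun ω => Real.exp (l * W i ω)) (ℙ : Measure Ω))
    (hmgf : ∀ i ∈ s, mgf (W i) (ℙ : Measure Ω) l ≤ Real.exp (bd i)) (e : ℝ) :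
    ((ℙ : Measure Ω) {ω | e ≤ ∑ i ∈ s, W i ω}).toReal
      ≤ Real.exp (-l * e + ∑ i ∈ s, bd i) := by
  have hset : {ω | e ≤ ∑ i ∈ s, W i ω} = {ω | e ≤ (∑ i ∈ s, W i) ω} := by
    ext ω; simp [Finset.sum_apply]
  rw [hset]
  have h1 := measure_ge_le_exp_mul_mgf (μ := (ℙ : Measure Ω)) (X := ∑ i ∈ s, W i) e hl
    (hindep.integrable_exp_mul_sum hmeas hint)
  rw [hindep.mgf_sum hmeas s] at h1
  calc ((ℙ : Measure Ω) {ω | e ≤ (∑ i ∈ s, W i) ω}).toReal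
      ≤ Real.exp (-l * e) * ∏ i ∈ s, mgf (W i) (ℙ : Measure Ω) l := h1
    _ ≤ Real.exp (-l * e) * ∏ i ∈ s, Real.exp (bd i) := by
        apply mul_le_mul_of_nonneg_left _ (Real.exp_nonneg _)
        exact Finset.prod_le_prod (fun i _ => mgf_nonneg) hmgf
    _ = Real.exp (-l * e + ∑ i ∈ s, bd i) := by
        rw [← Real.exp_sum, ← Real.exp_add]

lemma aux_series (n : ℕ) (hn : 2 ≤ n) (D : ℝ) (hD : 0 ≤ D) :
    (∑' j : ℕ, ENNReal.ofReal (D / ((n + j : ℕ):ℝ)^4)) ≤ ENNReal.ofReal (D / (n:ℝ)^2) := by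
  have hn1 : (1:ℝ) ≤ (n:ℝ) - 1 := by
    have : (2:ℝ) ≤ n := by exact_mod_cast hn
    linarith
  set f : ℕ → ℝ := fun j => 1/((n:ℝ) - 1 + j) with hf
  set a : ℕ → ℝ := fun j => (D/(n:ℝ)^2) * (f j - f (j+1)) with ha
  have hfpos : ∀ j : ℕ, (0:ℝ) < (n:ℝ) - 1 + j := by
    intro j; have : (0:ℝ) ≤ j := Nat.cast_nonneg j; linarith
  have hdiff : ∀ j : ℕ, f j - f (j+1) = 1/(((n:ℝ) - 1 + j) * ((n:ℝ) + j)) := by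
    intro j
    rw [hf]
    have h1 := hfpos j
    have h2 := hfpos (j+1)
    push_cast
    rw [div_sub_div _ _ (ne_of_gt h1) (by push_cast at h2 ⊢; linarith)]
    rw [div_eq_div_iff (by nlinarith) (by nlinarith)]
    ring
  have hdnn : ∀ j : ℕ, 0 ≤ f j - f (j+1) := by
    intro j; rw [hdiff j]; positivity
  have hann : ∀ j : ℕ, 0 ≤ a j := fun j => mul_nonneg (by positivity) (hdnn j)
  have h1 : ∀ j : ℕ, D / ((n + j : ℕ):ℝ)^4 ≤ a j := by
    intro j
    rw [ha]; simp only
    rw [hdiff j]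
    have hnj : ((n + j : ℕ):ℝ) = ((n:ℝ) - 1 + j) + 1 := by push_cast; ring
    have hx := hfpos j
    have key : 1 / ((n + j : ℕ):ℝ)^4 ≤ (1/(n:ℝ)^2) * (1/(((n:ℝ) - 1 + j) * ((n:ℝ) + j))) := by
      have hle : (n:ℝ) ≤ ((n:ℝ) - 1 + j) + 1 := by
        have : (0:ℝ) ≤ j := Nat.cast_nonneg j; linarith
      have hnj2 : (n:ℝ) + j = ((n:ℝ) - 1 + j) + 1 := by ring
      rw [hnj, hnj2, div_mul_div_comm, one_mul, div_le_div_iff₀ (by positivity) (by positivity),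
        one_mul, one_mul]
      have hn0 : (0:ℝ) < n := by positivity
      have h1 : (n:ℝ)^2 ≤ (((n:ℝ) - 1 + j)+1)^2 := pow_le_pow_left₀ hn0.le hle 2
      have h2 : ((n:ℝ) - 1 + j)*(((n:ℝ) - 1 + j)+1) ≤ (((n:ℝ) - 1 + j)+1)*(((n:ℝ) - 1 + j)+1) :=
        mul_le_mul_of_nonneg_right (by linarith) (by linarith)
      calc (n:ℝ)^2 * (((n:ℝ) - 1 + j) * (((n:ℝ) - 1 + j)+1))
          ≤ (((n:ℝ) - 1 + j)+1)^2 * ((((n:ℝ) - 1 + j)+1)*(((n:ℝ) - 1 + j)+1)) :=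
            mul_le_mul h1 h2 (by positivity) (by positivity)
        _ = (((n:ℝ) - 1 + j)+1)^4 := by ring
    calc D / ((n + j : ℕ):ℝ)^4 = D * (1 / ((n + j : ℕ):ℝ)^4) := by ring
      _ ≤ D * ((1/(n:ℝ)^2) * (1/(((n:ℝ) - 1 + j) * ((n:ℝ) + j)))) :=
          mul_le_mul_of_nonneg_left key hD
      _ = D/(n:ℝ)^2 * (1/(((n:ℝ) - 1 + j) * ((n:ℝ) + j))) := by ring
  have hpartial : ∀ N : ℕ, ∑ j ∈ Finset.range N, a j ≤ D/(n:ℝ)^2 := by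
    intro N
    rw [ha]
    simp only
    rw [← Finset.mul_sum, Finset.sum_range_sub' f]
    have hf0 : f 0 ≤ 1 := by
      rw [hf]; simp only [Nat.cast_zero, add_zero]
      rw [div_le_one (by linarith)]; linarith
    have hfN : 0 ≤ f N := by rw [hf]; positivity
    calc D/(n:ℝ)^2 * (f 0 - f N) ≤ D/(n:ℝ)^2 * 1 := by
          apply mul_le_mul_of_nonneg_left _ (by positivity); linarith
      _ = D/(n:ℝ)^2 := mul_one _
  have hsa : Summable a := summable_of_sum_range_le hann hpartial
  calc (∑' j : ℕ, ENNReal.ofReal (D / ((n + j : ℕ):ℝ)^4))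
      ≤ ∑' j : ℕ, ENNReal.ofReal (a j) :=
        ENNReal.tsum_le_tsum (fun j => ENNReal.ofReal_le_ofReal (h1 j))
    _ = ENNReal.ofReal (∑' j, a j) := (ENNReal.ofReal_tsum_of_nonneg hann hsa).symm
    _ ≤ ENNReal.ofReal (D / (n:ℝ)^2) := by
        apply ENNReal.ofReal_le_ofReal
        exact Real.tsum_le_of_sum_range_le hann hpartial

noncomputable def cvC (c α : ℝ) : ℝ := c^2 * (1 + 1/(2*α - 1))
noncomputable def epsC (c α : ℝ) : ℝ := 1/(4 * cvC c α)
noncomputable def ddC (c α : ℝ) : ℝ := 2 * (48/epsC c α)^12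

lemma cvC_pos {c α : ℝ} (hc : 0 < c) (hα : 1 < α) : 0 < cvC c α := by
  unfold cvC; have h : (0:ℝ) < 2*α - 1 := by linarith
  positivity

lemma epsC_pos {c α : ℝ} (hc : 0 < c) (hα : 1 < α) : 0 < epsC c α := by
  unfold epsC; have := cvC_pos hc hα; positivity

lemma ddC_pos {c α : ℝ} (hc : 0 < c) (hα : 1 < α) : 0 < ddC c α := by
  unfold ddC; have := epsC_pos hc hα; positivity

set_option maxHeartbeats 1600000 in
lemma aux_key {Ω : Type*} [MeasureSpace Ω] [IsProbabilityMeasure (ℙ : Measure Ω)]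
    (c α μm : ℝ) (hc : 0 < c) (hα : 1 < α) (hμ0 : 0 < μm) (hμ1 : μm ≤ 1)
    (X : ℕ → Ω → ℝ) (hmeas : ∀ i, Measurable (X i))
    (h01 : ∀ i ω, X i ω = 0 ∨ X i ω = 1)
    (hindep : iIndepFun X (ℙ : Measure Ω))
    (hEX : ∀ i, ∫ ω, X i ω ∂(ℙ : Measure Ω) = μm)
    (q' : ℕ → ℝ) (hq'def : ∀ i : ℕ, q' i = c * (i:ℝ) ^ (-α))
    (k : ℕ) (hk : 1 ≤ k) (hkc : (epsC c α * c)^3 ≤ (k:ℝ)) :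
    (ℙ : Measure Ω) {ω | (k:ℝ)^(-(α - 2/3)) ≤
        |(∑' i:ℕ, q' (k+i) * X (k+i) ω) - μm * ∑' i:ℕ, q' (k+i)|}
      ≤ ENNReal.ofReal (ddC c α / (k:ℝ)^4) := by
  have hk0 : (0:ℝ) < k := by exact_mod_cast hk
  have hk1R : (1:ℝ) ≤ k := by exact_mod_cast hk
  have hCV := cvC_pos hc hα
  have heps := epsC_pos hc hα
  have h2α : 1 < 2*α := by linarith
  have hq'0 : ∀ i, 0 ≤ q' i := fun i => by rw [hq'def]; positivity
  have hX01 : ∀ i ω, 0 ≤ X i ω ∧ X i ω ≤ 1 := by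
    intro i ω; rcases h01 i ω with h|h <;> rw [h] <;> norm_num
  have hsum_rpow : ∀ p : ℝ, 1 < p → ∀ m : ℕ, Summable (fun i : ℕ => ((m + i : ℕ):ℝ) ^ (-p)) := by
    intro p hp m
    have h0 : Summable (fun n : ℕ => ((n:ℝ)) ^ (-p)) := Real.summable_nat_rpow.2 (by linarith)
    exact ((summable_nat_add_iff m).2 h0).congr (fun i => by rw [Nat.add_comm])
  have hq'sumk : ∀ m : ℕ, Summable (fun i : ℕ => q' (m+i)) := by
    intro m
    exact ((hsum_rpow α hα m).mul_left c).congr (fun i => (hq'def (m+i)).symm)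
  have hsummand : ∀ (m : ℕ) (ω : Ω), Summable (fun i : ℕ => q' (m+i) * X (m+i) ω) := by
    intro m ω
    exact Summable.of_nonneg_of_le (fun i => mul_nonneg (hq'0 _) (hX01 _ ω).1)
      (fun i => mul_le_of_le_one_right (hq'0 _) (hX01 _ ω).2) (hq'sumk m)
  obtain ⟨T, hTdef⟩ : ∃ T : ℕ → ℝ, T = fun m : ℕ => ∑' i:ℕ, q' (m+i) := ⟨_, rfl⟩
  obtain ⟨S, hSdef⟩ : ∃ S : Ω → ℝ, S = fun ω => ∑' i:ℕ, q' (k+i) * X (k+i) ω := ⟨_, rfl⟩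
  have hTeq : ∀ m, T m = ∑' i:ℕ, q' (m+i) := fun m => by rw [hTdef]
  have hSeq : ∀ ω, S ω = ∑' i:ℕ, q' (k+i) * X (k+i) ω := fun ω => by rw [hSdef]
  have hgoal : {ω | (k:ℝ)^(-(α - 2/3)) ≤
        |(∑' i:ℕ, q' (k+i) * X (k+i) ω) - μm * ∑' i:ℕ, q' (k+i)|}
      = {ω | (k:ℝ)^(-(α - 2/3)) ≤ |S ω - μm * T k|} := by
    ext ω; rw [Set.mem_setOf_eq, Set.mem_setOf_eq, hSeq, hTeq]
  rw [hgoal]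
  have hT0 : ∀ m, 0 ≤ T m := fun m => by
    rw [hTeq]; exact tsum_nonneg (fun i => hq'0 _)
  have hTle : ∀ m : ℕ, 1 ≤ m → T m ≤ (c * (1 + 1/(α-1))) * (m:ℝ)^(1-α) := by
    intro m hm
    rw [hTeq]
    have h1 : ∑' i:ℕ, q' (m+i) = c * ∑' i:ℕ, ((m+i:ℕ):ℝ)^(-α) := by
      rw [← tsum_mul_left]; exact tsum_congr (fun i => hq'def (m+i))
    rw [h1]
    calc c * ∑' i:ℕ, ((m+i:ℕ):ℝ)^(-α) ≤ c * ((1 + 1/(α-1)) * (m:ℝ)^(1-α)) :=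
          mul_le_mul_of_nonneg_left (aux_tail hα m hm) hc.le
      _ = (c * (1 + 1/(α-1))) * (m:ℝ)^(1-α) := by ring
  have hSb : ∀ ω, 0 ≤ S ω ∧ S ω ≤ T k := by
    intro ω
    rw [hSeq, hTeq]
    constructor
    · exact tsum_nonneg (fun i => mul_nonneg (hq'0 _) (hX01 _ ω).1)
    · exact Summable.tsum_le_tsum (fun i => mul_le_of_le_one_right (hq'0 _) (hX01 _ ω).2)
        (hsummand k ω) (hq'sumk k)
  have hq'sq : ∀ i : ℕ, 1 ≤ i → (q' i)^2 = c^2 * ((i:ℕ):ℝ)^(-(2*α)) := by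
    intro i hi
    have hi0 : (0:ℝ) < i := by exact_mod_cast hi
    rw [hq'def, mul_pow, pow_two ((i:ℝ)^(-α)), ← Real.rpow_add hi0]
    congr 2
    ring
  have hsqsum : Summable (fun i : ℕ => (q' (k+i))^2) := by
    refine ((hsum_rpow (2*α) h2α k).mul_left (c^2)).congr (fun i => ?_)
    exact (hq'sq (k+i) (le_add_right hk)).symm
  have hVle : ∑' i:ℕ, (q' (k+i))^2 ≤ cvC c α * (k:ℝ)^(1-2*α) := by
    have h1 : ∑' i:ℕ, (q' (k+i))^2 = c^2 * ∑' i:ℕ, ((k+i:ℕ):ℝ)^(-(2*α)) := by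
      rw [← tsum_mul_left]; exact tsum_congr (fun i => hq'sq (k+i) (le_add_right hk))
    rw [h1]
    calc c^2 * ∑' i:ℕ, ((k+i:ℕ):ℝ)^(-(2*α)) ≤ c^2 * ((1 + 1/(2*α-1)) * (k:ℝ)^(1-2*α)) :=
          mul_le_mul_of_nonneg_left (aux_tail h2α k hk) (by positivity)
      _ = cvC c α * (k:ℝ)^(1-2*α) := by unfold cvC; ring
  have htkpos : (0:ℝ) < (k:ℝ)^(-(α - 2/3)) := Real.rpow_pos_of_pos hk0 _
  obtain ⟨M, hkM, hMle⟩ : ∃ M : ℕ, k ≤ M ∧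
      (c * (1 + 1/(α-1))) * (M:ℝ)^(1-α) ≤ (k:ℝ)^(-(α-2/3))/2 := by
    have h1 : Tendsto (fun x : ℝ => (c * (1 + 1/(α-1))) * x^(-(α-1))) atTop
        (𝓝 ((c * (1 + 1/(α-1))) * 0)) :=
      (tendsto_rpow_neg_atTop (by linarith)).const_mul _
    rw [mul_zero] at h1
    have h2 : Tendsto (fun M : ℕ => (c * (1 + 1/(α-1))) * ((M:ℝ))^(-(α-1))) atTop (𝓝 0) :=
      h1.comp tendsto_natCast_atTop_atTop
    have h3 := h2.eventually_le_const (show (0:ℝ) < (k:ℝ)^(-(α-2/3))/2 by positivity)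
    obtain ⟨M, hM1, hM2⟩ := ((eventually_ge_atTop k).and h3).exists
    refine ⟨M, hM1, ?_⟩
    rw [show (1-α:ℝ) = -(α-1) by ring]
    exact hM2
  have hM1 : 1 ≤ M := hk.trans hkM
  have hTM : T M ≤ (k:ℝ)^(-(α-2/3))/2 := (hTle M hM1).trans hMle
  -- lambda and its properties
  set k13 : ℝ := (k:ℝ)^((1:ℝ)/3) with hk13def
  have hk13ge : 1 ≤ k13 := by
    rw [hk13def, show (1:ℝ) = (k:ℝ)^(0:ℝ) by rw [Real.rpow_zero]]
    exact Real.rpow_le_rpow_of_exponent_le hk1R (by norm_num)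
  have hk13pos : 0 < k13 := lt_of_lt_of_le one_pos hk13ge
  set lam : ℝ := epsC c α * (k:ℝ)^(α - 1/3) with hlamdef
  have hlampos : 0 < lam := by
    rw [hlamdef]; exact mul_pos heps (Real.rpow_pos_of_pos hk0 _)
  have heck : epsC c α * c ≤ k13 := by
    have h3 : (0:ℝ) ≤ epsC c α * c := by positivity
    have h4 : (((epsC c α * c)^3 : ℝ)) ^ ((1:ℝ)/3) ≤ (k:ℝ) ^ ((1:ℝ)/3) :=
      Real.rpow_le_rpow (by positivity) hkc (by norm_num)
    have h5 : (((epsC c α * c)^3 : ℝ)) ^ ((1:ℝ)/3) = epsC c α * c := by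
      rw [← Real.rpow_natCast (epsC c α * c) 3, ← Real.rpow_mul h3]
      norm_num
    rw [h5] at h4
    exact h4
  have hq'mono : ∀ i : ℕ, k ≤ i → q' i ≤ q' k := by
    intro i hi
    rw [hq'def, hq'def]
    exact mul_le_mul_of_nonneg_left
      (Real.rpow_le_rpow_of_nonpos hk0 (by exact_mod_cast hi) (by linarith)) hc.le
  have hlamq : ∀ i : ℕ, k ≤ i → |lam * q' i| ≤ 1 := by
    intro i hi
    rw [abs_of_nonneg (mul_nonneg hlampos.le (hq'0 i))]
    have e1 : (k:ℝ)^(α - 1/3) * (k:ℝ)^(-α) = (k:ℝ)^(-(1/3) : ℝ) := by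
      rw [← Real.rpow_add hk0]; congr 1; ring
    have e2 : k13 * (k:ℝ)^(-(1/3):ℝ) = 1 := by
      rw [hk13def, ← Real.rpow_add hk0]
      norm_num
    calc lam * q' i ≤ lam * q' k := mul_le_mul_of_nonneg_left (hq'mono i hi) hlampos.le
      _ = (epsC c α * c) * ((k:ℝ)^(α - 1/3) * (k:ℝ)^(-α)) := by
          rw [hlamdef, hq'def]; ring
      _ = (epsC c α * c) * (k:ℝ)^(-(1/3):ℝ) := by rw [e1]
      _ ≤ k13 * (k:ℝ)^(-(1/3):ℝ) :=
          mul_le_mul_of_nonneg_right heck (Real.rpow_nonneg hk0.le _)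
      _ = 1 := e2
  -- sums of squares over Ico
  have hsumIco_sq : ∑ i ∈ Finset.Ico k M, (q' i)^2 ≤ cvC c α * (k:ℝ)^(1-2*α) := by
    rw [Finset.sum_Ico_eq_sum_range]
    calc ∑ i ∈ Finset.range (M-k), (q' (k+i))^2
        ≤ ∑' i:ℕ, (q' (k+i))^2 := Summable.sum_le_tsum _ (fun i _ => sq_nonneg _) hsqsum
      _ ≤ cvC c α * (k:ℝ)^(1-2*α) := hVle
  have hepsCV : epsC c α * cvC c α = 1/4 := by
    unfold epsC; field_simp
  have hbdsum : ∑ i ∈ Finset.Ico k M, (lam * q' i)^2 ≤ (epsC c α/4) * k13 := by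
    have eC : ((k:ℝ)^(α - 1/3))^2 = (k:ℝ)^(2*α - 2/3) := by
      rw [← Real.rpow_natCast ((k:ℝ)^(α - 1/3)) 2, ← Real.rpow_mul hk0.le]
      congr 1; push_cast; ring
    have eD : (k:ℝ)^(2*α - 2/3) * (k:ℝ)^(1-2*α) = k13 := by
      rw [← Real.rpow_add hk0, hk13def]; congr 1; ring
    have h1 : ∑ i ∈ Finset.Ico k M, (lam * q' i)^2
        = lam^2 * ∑ i ∈ Finset.Ico k M, (q' i)^2 := by
      rw [Finset.mul_sum]
      exact Finset.sum_congr rfl (fun i _ => by ring)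
    rw [h1]
    calc lam^2 * ∑ i ∈ Finset.Ico k M, (q' i)^2
        ≤ lam^2 * (cvC c α * (k:ℝ)^(1-2*α)) :=
          mul_le_mul_of_nonneg_left hsumIco_sq (sq_nonneg lam)
      _ = (epsC c α * (epsC c α * cvC c α)) * (((k:ℝ)^(2*α - 2/3)) * (k:ℝ)^(1-2*α)) := by
          rw [hlamdef, mul_pow, eC]; ring
      _ = (epsC c α/4) * k13 := by rw [hepsCV, eD]; ring
  have hlamtk : lam * ((k:ℝ)^(-(α-2/3))/2) = (epsC c α/2) * k13 := by
    have eE : (k:ℝ)^(α - 1/3) * (k:ℝ)^(-(α-2/3)) = k13 := by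
      rw [← Real.rpow_add hk0, hk13def]; congr 1; ring
    calc lam * ((k:ℝ)^(-(α-2/3))/2)
        = (epsC c α * ((k:ℝ)^(α - 1/3) * (k:ℝ)^(-(α-2/3))))/2 := by rw [hlamdef]; ring
      _ = (epsC c α/2) * k13 := by rw [eE]; ring
  have hexp_le : Real.exp (-lam * ((k:ℝ)^(-(α-2/3))/2) + ∑ i ∈ Finset.Ico k M, (lam * q' i)^2)
      ≤ Real.exp (-(epsC c α/4) * k13) := by
    apply Real.exp_le_exp.2
    have := hbdsum
    rw [neg_mul, hlamtk]
    linarith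
  -- the two one-sided Chernoff bounds
  have hWmeas : ∀ i, Measurable (fun ω => q' i * X i ω - q' i * μm) :=
    fun i => ((hmeas i).const_mul _).sub_const _
  have hW'meas : ∀ i, Measurable (fun ω => (-q' i) * X i ω - (-q' i) * μm) :=
    fun i => ((hmeas i).const_mul _).sub_const _
  have hWindep : iIndepFun
      (fun i ω => q' i * X i ω - q' i * μm) (ℙ : Measure Ω) := by
    have h := hindep.comp (fun i (x:ℝ) => q' i * x - q' i * μm)
      (fun i => (measurable_id.const_mul _).sub_const _)
    exact h
  have hW'indep : iIndepFun
      (fun i ω => (-q' i) * X i ω - (-q' i) * μm) (ℙ : Measure Ω) := by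
    have h := hindep.comp (fun i (x:ℝ) => (-q' i) * x - (-q' i) * μm)
      (fun i => (measurable_id.const_mul _).sub_const _)
    exact h
  have hWb : ∀ (r : ℝ) (i : ℕ) (ω : Ω), |r| = q' i → |r * X i ω - r * μm| ≤ q' i := by
    intro r i ω hr
    rw [show r * X i ω - r * μm = r * (X i ω - μm) by ring, abs_mul, hr]
    have h1 : |X i ω - μm| ≤ 1 := by
      rcases hX01 i ω with ⟨h2, h3⟩
      rw [abs_le]; constructor <;> linarith
    calc q' i * |X i ω - μm| ≤ q' i * 1 := mul_le_mul_of_nonneg_left h1 (hq'0 i)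
      _ = q' i := mul_one _
  have hWint : ∀ (l : ℝ) (r : ℝ) (i : ℕ), |r| = q' i → Measurable (X i) →
      Integrable (fun ω => Real.exp (l * (r * X i ω - r * μm))) (ℙ : Measure Ω) := by
    intro l r i hr hmi
    apply aux_integrable_of_bounded
      (((hmi.const_mul r).sub_const _).const_mul l).exp (Real.exp (|l| * q' i))
    intro ω
    rw [abs_of_pos (Real.exp_pos _)]
    apply Real.exp_le_exp.2
    calc l * (r * X i ω - r * μm) ≤ |l * (r * X i ω - r * μm)| := le_abs_self _
      _ = |l| * |r * X i ω - r * μm| := abs_mul _ _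
      _ ≤ |l| * q' i := mul_le_mul_of_nonneg_left (hWb r i ω hr) (abs_nonneg l)
  have habs_q : ∀ i, |q' i| = q' i := fun i => abs_of_nonneg (hq'0 i)
  have habs_nq : ∀ i, |(-q' i)| = q' i := fun i => by rw [abs_neg]; exact habs_q i
  have hchern1 := aux_chernoff (fun i ω => q' i * X i ω - q' i * μm) hWmeas hWindep
    (Finset.Ico k M) lam hlampos.le (fun i => (lam * q' i)^2)
    (fun i _ => hWint lam (q' i) i (habs_q i) (hmeas i))
    (fun i hi => aux_mgf_bernoulli (hmeas i) (h01 i) hμ0.le hμ1 (hEX i)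
      (hlamq i (Finset.mem_Ico.1 hi).1))
    ((k:ℝ)^(-(α-2/3))/2)
  have hchern2 := aux_chernoff (fun i ω => (-q' i) * X i ω - (-q' i) * μm) hW'meas hW'indep
    (Finset.Ico k M) lam hlampos.le (fun i => (lam * q' i)^2)
    (fun i _ => hWint lam (-q' i) i (habs_nq i) (hmeas i))
    (fun i hi => by
      have hu : |lam * (-q' i)| ≤ 1 := by
        rw [show lam * (-q' i) = -(lam * q' i) by ring, abs_neg]
        exact hlamq i (Finset.mem_Ico.1 hi).1
      have h := aux_mgf_bernoulli (hmeas i) (h01 i) hμ0.le hμ1 (hEX i) hu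
      rwa [show (lam * (-q' i))^2 = (lam * q' i)^2 by ring] at h)
    ((k:ℝ)^(-(α-2/3))/2)
  -- event inclusion
  have hsub : {ω | (k:ℝ)^(-(α - 2/3)) ≤ |S ω - μm * T k|}
      ⊆ {ω | (k:ℝ)^(-(α-2/3))/2 ≤ ∑ i ∈ Finset.Ico k M, (q' i * X i ω - q' i * μm)}
        ∪ {ω | (k:ℝ)^(-(α-2/3))/2 ≤ ∑ i ∈ Finset.Ico k M, ((-q' i) * X i ω - (-q' i) * μm)} := by
    intro ω hω
    rw [Set.mem_setOf_eq] at hω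
    have hidx : ∀ i:ℕ, k + (i + (M-k)) = M + i := fun i => by omega
    have hsplitS : S ω = (∑ i ∈ Finset.Ico k M, q' i * X i ω)
        + ∑' i:ℕ, q' (M+i) * X (M+i) ω := by
      have h2 : ∑' i:ℕ, q' (M+i) * X (M+i) ω
          = ∑' i:ℕ, q' (k+(i+(M-k))) * X (k+(i+(M-k))) ω :=
        tsum_congr (fun i => by rw [hidx i])
      have hIco : ∑ i ∈ Finset.Ico k M, q' i * X i ω
          = ∑ i ∈ Finset.range (M-k), q' (k+i) * X (k+i) ω :=
        Finset.sum_Ico_eq_sum_range (f := fun j => q' j * X j ω) k M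
      calc S ω = ∑' i:ℕ, q' (k+i) * X (k+i) ω := hSeq ω
        _ = (∑ i ∈ Finset.range (M-k), q' (k+i) * X (k+i) ω)
            + ∑' i:ℕ, q' (k+(i+(M-k))) * X (k+(i+(M-k))) ω :=
          (Summable.sum_add_tsum_nat_add _ (hsummand k ω)).symm
        _ = (∑ i ∈ Finset.Ico k M, q' i * X i ω) + ∑' i:ℕ, q' (M+i) * X (M+i) ω := by
          rw [hIco, h2]
    have hsplitT : T k = (∑ i ∈ Finset.Ico k M, q' i) + T M := by
      have h2 : ∑' i:ℕ, q' (M+i) = ∑' i:ℕ, q' (k+(i+(M-k))) :=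
        tsum_congr (fun i => by rw [hidx i])
      have hIco : ∑ i ∈ Finset.Ico k M, q' i
          = ∑ i ∈ Finset.range (M-k), q' (k+i) :=
        Finset.sum_Ico_eq_sum_range (f := fun j => q' j) k M
      calc T k = ∑' i:ℕ, q' (k+i) := hTeq k
        _ = (∑ i ∈ Finset.range (M-k), q' (k+i)) + ∑' i:ℕ, q' (k+(i+(M-k))) :=
          (Summable.sum_add_tsum_nat_add _ (hq'sumk k)).symm
        _ = (∑ i ∈ Finset.Ico k M, q' i) + T M := by
          rw [hIco, hTeq M, h2]
    have hsumW : ∑ i ∈ Finset.Ico k M, (q' i * X i ω - q' i * μm)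
        = (∑ i ∈ Finset.Ico k M, q' i * X i ω) - μm * ∑ i ∈ Finset.Ico k M, q' i := by
      rw [Finset.sum_sub_distrib, Finset.mul_sum]
      congr 1
      exact Finset.sum_congr rfl (fun i _ => mul_comm _ _)
    have hR0 : 0 ≤ ∑' i:ℕ, q' (M+i) * X (M+i) ω :=
      tsum_nonneg (fun i => mul_nonneg (hq'0 _) (hX01 _ ω).1)
    have hRle : ∑' i:ℕ, q' (M+i) * X (M+i) ω ≤ T M := by
      rw [hTeq]
      exact Summable.tsum_le_tsum (fun i => mul_le_of_le_one_right (hq'0 _) (hX01 _ ω).2)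
        (hsummand M ω) (hq'sumk M)
    have hTM0 : 0 ≤ T M := hT0 M
    have hmTM : μm * T M ≤ T M := by nlinarith
    have hmTM0 : 0 ≤ μm * T M := mul_nonneg hμ0.le hTM0
    have hdecomp : S ω - μm * T k
        = (∑ i ∈ Finset.Ico k M, (q' i * X i ω - q' i * μm))
          + ((∑' i:ℕ, q' (M+i) * X (M+i) ω) - μm * T M) := by
      rw [hsplitS, hsplitT, hsumW]; ring
    have htail : |(∑' i:ℕ, q' (M+i) * X (M+i) ω) - μm * T M| ≤ (k:ℝ)^(-(α-2/3))/2 := by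
      rw [abs_le]
      constructor <;> [skip; skip] <;> nlinarith [hTM, hRle, hR0, hmTM, hmTM0]
    have hW2 : (k:ℝ)^(-(α-2/3))/2 ≤ |∑ i ∈ Finset.Ico k M, (q' i * X i ω - q' i * μm)| := by
      have h1 : |S ω - μm * T k| ≤ |∑ i ∈ Finset.Ico k M, (q' i * X i ω - q' i * μm)|
          + |(∑' i:ℕ, q' (M+i) * X (M+i) ω) - μm * T M| := by
        rw [hdecomp]; exact abs_add_le _ _
      linarith
    rcases le_abs.1 hW2 with h | h
    · left; exact h
    · right
      rw [Set.mem_setOf_eq]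
      have hWW' : ∑ i ∈ Finset.Ico k M, ((-q' i) * X i ω - (-q' i) * μm)
          = -∑ i ∈ Finset.Ico k M, (q' i * X i ω - q' i * μm) := by
        rw [← Finset.sum_neg_distrib]
        exact Finset.sum_congr rfl (fun i _ => by ring)
      rw [hWW']
      exact h
  -- measure arithmetic
  have hA1 : (ℙ : Measure Ω) {ω | (k:ℝ)^(-(α-2/3))/2
        ≤ ∑ i ∈ Finset.Ico k M, (q' i * X i ω - q' i * μm)}
      ≤ ENNReal.ofReal (Real.exp (-(epsC c α/4) * k13)) := by
    rw [← ENNReal.ofReal_toReal (measure_ne_top (ℙ : Measure Ω) _)]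
    exact ENNReal.ofReal_le_ofReal (hchern1.trans hexp_le)
  have hA2 : (ℙ : Measure Ω) {ω | (k:ℝ)^(-(α-2/3))/2
        ≤ ∑ i ∈ Finset.Ico k M, ((-q' i) * X i ω - (-q' i) * μm)}
      ≤ ENNReal.ofReal (Real.exp (-(epsC c α/4) * k13)) := by
    rw [← ENNReal.ofReal_toReal (measure_ne_top (ℙ : Measure Ω) _)]
    exact ENNReal.ofReal_le_ofReal (hchern2.trans hexp_le)
  -- final numeric bound
  have hE2 : 2 * Real.exp (-(epsC c α/4) * k13) ≤ ddC c α / (k:ℝ)^4 := by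
    set x : ℝ := (epsC c α/4) * k13 with hxdef
    have hxpos : 0 < x := by rw [hxdef]; positivity
    have h1 : x/12 ≤ Real.exp (x/12) := by
      have := Real.add_one_le_exp (x/12); linarith
    have h2' : (Real.exp (x/12))^(12:ℕ) = Real.exp x := by
      rw [← Real.exp_nat_mul]; congr 1; push_cast; ring
    have h2 : (x/12)^(12:ℕ) ≤ Real.exp x := by
      rw [← h2']
      exact pow_le_pow_left₀ (by positivity) h1 12
    have h3 : Real.exp (-x) ≤ ((x/12)^(12:ℕ))⁻¹ := by
      rw [Real.exp_neg]
      exact inv_anti₀ (by positivity) h2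
    have hk134 : k13^(12:ℕ) = (k:ℝ)^(4:ℕ) := by
      rw [hk13def, ← Real.rpow_natCast ((k:ℝ)^((1:ℝ)/3)) 12, ← Real.rpow_mul hk0.le,
        ← Real.rpow_natCast (k:ℝ) 4]
      norm_num
    have h4 : ((x/12)^(12:ℕ))⁻¹ = (48/epsC c α)^12 / (k:ℝ)^4 := by
      have hx12 : x/12 = (epsC c α/48) * k13 := by rw [hxdef]; ring
      rw [hx12, mul_pow, hk134, mul_inv, ← inv_pow, inv_div]; ring
    have h5 : Real.exp (-x) ≤ (48/epsC c α)^12 / (k:ℝ)^4 := by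
      rw [← h4]; exact h3
    have : -(epsC c α/4) * k13 = -x := by rw [hxdef]; ring
    rw [this]
    calc 2 * Real.exp (-x) ≤ 2 * ((48/epsC c α)^12 / (k:ℝ)^4) := by linarith
      _ = ddC c α / (k:ℝ)^4 := by unfold ddC; ring
  calc (ℙ : Measure Ω) {ω | (k:ℝ)^(-(α - 2/3)) ≤ |S ω - μm * T k|}
      ≤ (ℙ : Measure Ω) ({ω | (k:ℝ)^(-(α-2/3))/2
          ≤ ∑ i ∈ Finset.Ico k M, (q' i * X i ω - q' i * μm)}
        ∪ {ω | (k:ℝ)^(-(α-2/3))/2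
          ≤ ∑ i ∈ Finset.Ico k M, ((-q' i) * X i ω - (-q' i) * μm)}) := measure_mono hsub
    _ ≤ (ℙ : Measure Ω) {ω | (k:ℝ)^(-(α-2/3))/2
          ≤ ∑ i ∈ Finset.Ico k M, (q' i * X i ω - q' i * μm)}
        + (ℙ : Measure Ω) {ω | (k:ℝ)^(-(α-2/3))/2
          ≤ ∑ i ∈ Finset.Ico k M, ((-q' i) * X i ω - (-q' i) * μm)} := measure_union_le _ _
    _ ≤ ENNReal.ofReal (Real.exp (-(epsC c α/4) * k13))
        + ENNReal.ofReal (Real.exp (-(epsC c α/4) * k13)) := add_le_add hA1 hA2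
    _ = ENNReal.ofReal (2 * Real.exp (-(epsC c α/4) * k13)) := by
        rw [← ENNReal.ofReal_add (Real.exp_nonneg _) (Real.exp_nonneg _)]
        congr 1; ring
    _ ≤ ENNReal.ofReal (ddC c α / (k:ℝ)^4) := ENNReal.ofReal_le_ofReal hE2

/-- Uniform tail concentration for randomly thinned Zipf tail sums: with
`Y n = ∑_{i=n}^∞ q i · X i`, `q i = c i^{-α}`, `X i` i.i.d. Bernoulli(μ),
there are `n₀, c₀ > 0` with
`P[∀ k ≥ n, |Y k − E Y k| < k^{-(α-2/3)}] > 1 − c₀/n²` for all `n > n₀`. -/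
theorem stmt6 {Ω : Type*} [MeasureSpace Ω] [IsProbabilityMeasure (ℙ : Measure Ω)]
    (c α μm : ℝ) (hc : 0 < c) (hα : 1 < α) (hμ0 : 0 < μm) (hμ1 : μm ≤ 1)
    (X : ℕ → Ω → ℝ) (hmeas : ∀ i, Measurable (X i))
    (h01 : ∀ i ω, X i ω = 0 ∨ X i ω = 1)
    (hindep : iIndepFun X ℙ)
    (hdist : ∀ i, (ℙ : Measure Ω) {ω | X i ω = 1} = ENNReal.ofReal μm)
    (q : ℕ → ℝ) (hq : ∀ i : ℕ, 1 ≤ i → q i = c * (i : ℝ) ^ (-α))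
    (Y : ℕ → Ω → ℝ) (hY : ∀ n ω, Y n ω = ∑' i : ℕ, q (n + i) * X (n + i) ω) :
    ∃ (n₀ : ℕ) (c₀ : ℝ), 0 < c₀ ∧ ∀ n : ℕ, n₀ < n →
      1 - ENNReal.ofReal (c₀ / (n : ℝ) ^ 2) <
        (ℙ : Measure Ω)
          {ω | ∀ k : ℕ, n ≤ k →
            |Y k ω - ∫ ω', Y k ω' ∂(ℙ : Measure Ω)| < (k : ℝ) ^ (-(α - 2 / 3))} := by
  obtain ⟨q2, hq2⟩ : ∃ f : ℕ → ℝ, f = fun i : ℕ => c * (i:ℝ)^(-α) := ⟨_, rfl⟩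
  have hq2def : ∀ i : ℕ, q2 i = c * (i:ℝ)^(-α) := fun i => by rw [hq2]
  have hqq2 : ∀ i : ℕ, 1 ≤ i → q i = q2 i := fun i hi => by rw [hq i hi, hq2def]
  have hq2_0 : ∀ i, 0 ≤ q2 i := fun i => by rw [hq2def]; positivity
  have hX01 : ∀ i ω, 0 ≤ X i ω ∧ X i ω ≤ 1 := by
    intro i ω; rcases h01 i ω with h|h <;> rw [h] <;> norm_num
  have hsum_rpow : ∀ m : ℕ, Summable (fun i : ℕ => ((m + i : ℕ):ℝ) ^ (-α)) := by
    intro m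
    have h0 : Summable (fun n : ℕ => ((n:ℝ)) ^ (-α)) := Real.summable_nat_rpow.2 (by linarith)
    exact ((summable_nat_add_iff m).2 h0).congr (fun i => by rw [Nat.add_comm])
  have hq2sumk : ∀ m : ℕ, Summable (fun i : ℕ => q2 (m+i)) := by
    intro m
    exact ((hsum_rpow m).mul_left c).congr (fun i => (hq2def (m+i)).symm)
  have hEX : ∀ i, ∫ ω, X i ω ∂(ℙ : Measure Ω) = μm := by
    intro i
    have hA : MeasurableSet (X i ⁻¹' {1}) := (hmeas i) (measurableSet_singleton 1)
    have hind : X i = fun ω => Set.indicator (X i ⁻¹' {1}) (fun _ => (1:ℝ)) ω := by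
      funext ω
      rcases h01 i ω with h|h
      · rw [h]; symm; apply Set.indicator_of_notMem
        rw [Set.mem_preimage, Set.mem_singleton_iff, h]; norm_num
      · rw [h]; symm
        have : ω ∈ X i ⁻¹' {1} := by rw [Set.mem_preimage, Set.mem_singleton_iff, h]
        rw [Set.indicator_of_mem this]
    have hps : X i ⁻¹' {1} = {ω | X i ω = 1} := by
      ext ω; rw [Set.mem_preimage, Set.mem_singleton_iff, Set.mem_setOf_eq]
    conv_lhs => rw [hind]
    rw [integral_indicator_const (1:ℝ) hA, hps, measureReal_def, hdist i, smul_eq_mul, mul_one,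
      ENNReal.toReal_ofReal hμ0.le]
  have hYeq : ∀ k : ℕ, 1 ≤ k → ∀ ω, Y k ω = ∑' i:ℕ, q2 (k+i) * X (k+i) ω := by
    intro k hk ω
    rw [hY]
    exact tsum_congr fun i => by rw [hqq2 (k+i) (le_add_right hk)]
  have hEY : ∀ k:ℕ, 1 ≤ k →
      ∫ ω, Y k ω ∂(ℙ : Measure Ω) = μm * ∑' i:ℕ, q2 (k+i) := by
    intro k hk
    rw [integral_congr_ae (ae_of_all _ (hYeq k hk))]
    have hb : ∀ i:ℕ, ∫⁻ ω, ‖q2 (k+i) * X (k+i) ω‖₊ ∂(ℙ : Measure Ω)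
        ≤ ENNReal.ofReal (q2 (k+i)) := by
      intro i
      calc ∫⁻ ω, ‖q2 (k+i) * X (k+i) ω‖₊ ∂(ℙ : Measure Ω)
          ≤ ∫⁻ _, ENNReal.ofReal (q2 (k+i)) ∂(ℙ : Measure Ω) := by
            apply lintegral_mono
            intro ω
            show (‖q2 (k+i) * X (k+i) ω‖₊ : ℝ≥0∞) ≤ ENNReal.ofReal (q2 (k+i))
            rw [← ENNReal.ofReal_coe_nnreal, coe_nnnorm]
            apply ENNReal.ofReal_le_ofReal
            rw [Real.norm_eq_abs, abs_mul, abs_of_nonneg (hq2_0 _),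
              abs_of_nonneg (hX01 _ ω).1]
            exact mul_le_of_le_one_right (hq2_0 _) (hX01 _ ω).2
        _ = ENNReal.ofReal (q2 (k+i)) := by simp
    have hfin : ∑' i:ℕ, ∫⁻ ω, ‖q2 (k+i) * X (k+i) ω‖₊ ∂(ℙ : Measure Ω) ≠ ⊤ :=
      ne_top_of_le_ne_top
        (by rw [← ENNReal.ofReal_tsum_of_nonneg (fun i => hq2_0 _) (hq2sumk k)]
            exact ENNReal.ofReal_ne_top)
        (ENNReal.tsum_le_tsum hb)
    rw [integral_tsum (fun i => ((hmeas (k+i)).const_mul _).aestronglyMeasurable) hfin]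
    have h1 : ∀ i:ℕ, ∫ ω, q2 (k+i) * X (k+i) ω ∂(ℙ : Measure Ω) = μm * q2 (k+i) := by
      intro i; rw [MeasureTheory.integral_const_mul, hEX]; ring
    rw [tsum_congr h1, tsum_mul_left]
  -- choose n₀
  obtain ⟨nc, hnc⟩ := exists_nat_ge ((epsC c α * c)^3)
  obtain ⟨nd, hnd⟩ := exists_nat_ge (2 * ddC c α)
  have hDD := ddC_pos hc hα
  refine ⟨max 2 (max nc nd), ddC c α + 1, by linarith, ?_⟩
  intro n hn
  have hn2 : 2 ≤ n := le_trans (le_max_left _ _) hn.le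
  have hn1 : 1 ≤ n := le_trans (by norm_num) hn2
  have hn0 : (0:ℝ) < n := by exact_mod_cast hn1
  have hnnc : (epsC c α * c)^3 ≤ (n:ℝ) := by
    have h1 : nc ≤ n := le_trans (le_trans (le_max_left _ _) (le_max_right 2 _)) hn.le
    exact hnc.trans (by exact_mod_cast h1)
  have hnD : 2 * ddC c α ≤ (n:ℝ) := by
    have h1 : nd ≤ n := le_trans (le_trans (le_max_right _ _) (le_max_right 2 _)) hn.le
    exact hnd.trans (by exact_mod_cast h1)
  -- per-k bound
  have hB : ∀ k:ℕ, n ≤ k →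
      (ℙ : Measure Ω) {ω | (k:ℝ)^(-(α-2/3)) ≤ |Y k ω - ∫ ω', Y k ω' ∂(ℙ : Measure Ω)|}
        ≤ ENNReal.ofReal (ddC c α / (k:ℝ)^4) := by
    intro k hkn
    have hk1 : 1 ≤ k := le_trans hn1 hkn
    have hset : {ω | (k:ℝ)^(-(α-2/3)) ≤ |Y k ω - ∫ ω', Y k ω' ∂(ℙ : Measure Ω)|}
        = {ω | (k:ℝ)^(-(α-2/3)) ≤
            |(∑' i:ℕ, q2 (k+i) * X (k+i) ω) - μm * ∑' i:ℕ, q2 (k+i)|} := by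
      ext ω
      rw [Set.mem_setOf_eq, Set.mem_setOf_eq, hEY k hk1, hYeq k hk1 ω]
    rw [hset]
    exact aux_key c α μm hc hα hμ0 hμ1 X hmeas h01 hindep hEX q2 hq2def k hk1
      (le_trans hnnc (by exact_mod_cast hkn))
  -- union bound
  have hGc : {ω | ∀ k : ℕ, n ≤ k →
        |Y k ω - ∫ ω', Y k ω' ∂(ℙ : Measure Ω)| < (k : ℝ) ^ (-(α - 2 / 3))}ᶜ
      ⊆ ⋃ j:ℕ, {ω | ((n+j:ℕ):ℝ)^(-(α-2/3))
          ≤ |Y (n+j) ω - ∫ ω', Y (n+j) ω' ∂(ℙ : Measure Ω)|} := by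
    intro ω hω
    simp only [Set.mem_compl_iff, Set.mem_setOf_eq, not_forall] at hω
    obtain ⟨k, hkn, hk⟩ := hω
    rw [Set.mem_iUnion]
    refine ⟨k - n, ?_⟩
    have hkk : n + (k - n) = k := by omega
    rw [Set.mem_setOf_eq, hkk]
    exact not_lt.1 hk
  have hbad : (ℙ : Measure Ω) ({ω | ∀ k : ℕ, n ≤ k →
        |Y k ω - ∫ ω', Y k ω' ∂(ℙ : Measure Ω)| < (k : ℝ) ^ (-(α - 2 / 3))}ᶜ)
      ≤ ENNReal.ofReal (ddC c α / (n:ℝ)^2) := by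
    calc (ℙ : Measure Ω) ({ω | ∀ k : ℕ, n ≤ k →
          |Y k ω - ∫ ω', Y k ω' ∂(ℙ : Measure Ω)| < (k : ℝ) ^ (-(α - 2 / 3))}ᶜ)
        ≤ (ℙ : Measure Ω) (⋃ j:ℕ, {ω | ((n+j:ℕ):ℝ)^(-(α-2/3))
            ≤ |Y (n+j) ω - ∫ ω', Y (n+j) ω' ∂(ℙ : Measure Ω)|}) := measure_mono hGc
      _ ≤ ∑' j:ℕ, (ℙ : Measure Ω) {ω | ((n+j:ℕ):ℝ)^(-(α-2/3))
            ≤ |Y (n+j) ω - ∫ ω', Y (n+j) ω' ∂(ℙ : Measure Ω)|} := measure_iUnion_le _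
      _ ≤ ∑' j:ℕ, ENNReal.ofReal (ddC c α / ((n+j:ℕ):ℝ)^4) :=
          ENNReal.tsum_le_tsum (fun j => hB (n+j) (Nat.le_add_right n j))
      _ ≤ ENNReal.ofReal (ddC c α / (n:ℝ)^2) := aux_series n hn2 (ddC c α) hDD.le
  have hlow : 1 - ENNReal.ofReal (ddC c α / (n:ℝ)^2)
      ≤ (ℙ : Measure Ω) {ω | ∀ k : ℕ, n ≤ k →
          |Y k ω - ∫ ω', Y k ω' ∂(ℙ : Measure Ω)| < (k : ℝ) ^ (-(α - 2 / 3))} := by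
    rw [tsub_le_iff_right]
    calc (1:ℝ≥0∞) = (ℙ : Measure Ω) Set.univ := measure_univ.symm
      _ = (ℙ : Measure Ω) ({ω | ∀ k : ℕ, n ≤ k →
            |Y k ω - ∫ ω', Y k ω' ∂(ℙ : Measure Ω)| < (k : ℝ) ^ (-(α - 2 / 3))}
          ∪ {ω | ∀ k : ℕ, n ≤ k →
            |Y k ω - ∫ ω', Y k ω' ∂(ℙ : Measure Ω)| < (k : ℝ) ^ (-(α - 2 / 3))}ᶜ) := by
          rw [Set.union_compl_self]
      _ ≤ (ℙ : Measure Ω) {ω | ∀ k : ℕ, n ≤ k →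
            |Y k ω - ∫ ω', Y k ω' ∂(ℙ : Measure Ω)| < (k : ℝ) ^ (-(α - 2 / 3))}
          + (ℙ : Measure Ω) ({ω | ∀ k : ℕ, n ≤ k →
            |Y k ω - ∫ ω', Y k ω' ∂(ℙ : Measure Ω)| < (k : ℝ) ^ (-(α - 2 / 3))}ᶜ) :=
          measure_union_le _ _
      _ ≤ _ := add_le_add le_rfl hbad
  have hhalf : ddC c α / (n:ℝ)^2 < 1 := by
    have hn1R : (1:ℝ) ≤ n := by exact_mod_cast hn1
    have h1 : ddC c α / (n:ℝ)^2 ≤ ddC c α / (n:ℝ) := by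
      rw [div_le_div_iff₀ (by positivity) hn0]
      exact mul_le_mul_of_nonneg_left (by nlinarith) hDD.le
    have h2 : ddC c α / (n:ℝ) ≤ 1/2 := by
      rw [div_le_div_iff₀ hn0 (by norm_num)]
      linarith
    linarith
  calc 1 - ENNReal.ofReal ((ddC c α + 1) / (n:ℝ)^2)
      = 1 - (ENNReal.ofReal (ddC c α/(n:ℝ)^2) + ENNReal.ofReal (1/(n:ℝ)^2)) := by
        rw [← ENNReal.ofReal_add (by positivity) (by positivity)]
        congr 1
        rw [← add_div]
    _ = (1 - ENNReal.ofReal (ddC c α/(n:ℝ)^2)) - ENNReal.ofReal (1/(n:ℝ)^2) :=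
        tsub_add_eq_tsub_tsub _ _ _
    _ < 1 - ENNReal.ofReal (ddC c α/(n:ℝ)^2) := by
        apply ENNReal.sub_lt_self
        · exact ne_top_of_le_ne_top ENNReal.one_ne_top tsub_le_self
        · rw [← pos_iff_ne_zero, tsub_pos_iff_lt]
          exact ENNReal.ofReal_lt_one.2 hhalf
        · exact (ENNReal.ofReal_pos.2 (by positivity)).ne'
    _ ≤ _ := hlow
end

section
/- Fix α > 1 and c > 0 and let q_i = c i^{-α}. For each x > 0 there exists a unique t = t_C(x) > 0 solving Σ_{i=1}^∞ (1 - e^{-q_i t}) = x, and t_C(x) ~ x^α / (c Γ(1 - 1/α)^α) as x → ∞. -/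
open Filter Real MeasureTheory Set
open scoped ENNReal

noncomputable def cheG (α lam x : ℝ) : ℝ := 1 - Real.exp (-(lam * x ^ (-α)))

noncomputable def cheS (α lam : ℝ) : ℝ := ∑' i : ℕ, cheG α lam ((i : ℝ) + 1)

lemma cheG_nonneg {α lam x : ℝ} (hlam : 0 ≤ lam) (hx : 0 ≤ x) : 0 ≤ cheG α lam x := by
  have h1 : 0 ≤ lam * x ^ (-α) := mul_nonneg hlam (Real.rpow_nonneg hx _)
  have h2 : Real.exp (-(lam * x ^ (-α))) ≤ Real.exp 0 := Real.exp_le_exp.2 (by linarith)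
  rw [Real.exp_zero] at h2
  simp only [cheG]; linarith

lemma cheG_le_one {α lam x : ℝ} : cheG α lam x ≤ 1 := by
  have := Real.exp_pos (-(lam * x ^ (-α)))
  simp only [cheG]; linarith

lemma cheG_le {α lam x : ℝ} : cheG α lam x ≤ lam * x ^ (-α) := by
  have := Real.add_one_le_exp (-(lam * x ^ (-α)))
  simp only [cheG]; linarith

lemma cheG_antitone {α lam x y : ℝ} (hα : 0 < α) (hlam : 0 ≤ lam) (hx : 0 < x) (hxy : x ≤ y) :
    cheG α lam y ≤ cheG α lam x := by
  have hy : 0 < y := lt_of_lt_of_le hx hxy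
  have h1 : y ^ (-α) ≤ x ^ (-α) :=
    (Real.rpow_le_rpow_iff_of_neg hy hx (by linarith)).2 hxy
  have h2 : lam * y ^ (-α) ≤ lam * x ^ (-α) := mul_le_mul_of_nonneg_left h1 hlam
  have h3 : Real.exp (-(lam * x ^ (-α))) ≤ Real.exp (-(lam * y ^ (-α))) :=
    Real.exp_le_exp.2 (by linarith)
  simp only [cheG]; linarith

lemma che_summable {α : ℝ} (hα : 1 < α) {lam : ℝ} (hlam : 0 ≤ lam) :
    Summable (fun i : ℕ => cheG α lam ((i : ℝ) + 1)) := by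
  have h1 : Summable (fun n : ℕ => (n : ℝ) ^ (-α)) := Real.summable_nat_rpow.2 (by linarith)
  have h2 : Summable (fun n : ℕ => ((n + 1 : ℕ) : ℝ) ^ (-α)) := (summable_nat_add_iff 1).2 h1
  have h3 : Summable (fun n : ℕ => lam * ((n : ℝ) + 1) ^ (-α)) := by
    have := h2.mul_left lam
    convert this using 2 with n
    push_cast
    rfl
    simp
  apply Summable.of_nonneg_of_le (fun i => cheG_nonneg hlam (by positivity)) (fun i => cheG_le) h3

lemma cheS_zero (α : ℝ) : cheS α 0 = 0 := by
  simp [cheS, cheG]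

lemma cheS_lt {α : ℝ} (hα : 1 < α) {a b : ℝ} (ha : 0 ≤ a) (hab : a < b) :
    cheS α a < cheS α b := by
  have hb : 0 ≤ b := le_of_lt (lt_of_le_of_lt ha hab)
  refine Summable.tsum_lt_tsum_of_nonneg (i := 0)
    (fun i => cheG_nonneg ha (by positivity)) (fun i => ?_) ?_ (che_summable hα hb)
  · have hc : (0:ℝ) < ((i : ℝ) + 1) ^ (-α) := by positivity
    have : a * ((i : ℝ) + 1) ^ (-α) ≤ b * ((i : ℝ) + 1) ^ (-α) :=
      mul_le_mul_of_nonneg_right hab.le hc.le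
    have := Real.exp_le_exp.2 (neg_le_neg this)
    simp only [cheG]; linarith
  · have hc : (0:ℝ) < (((0:ℕ) : ℝ) + 1) ^ (-α) := by positivity
    have : a * (((0:ℕ) : ℝ) + 1) ^ (-α) < b * (((0:ℕ) : ℝ) + 1) ^ (-α) :=
      mul_lt_mul_of_pos_right hab hc
    have := Real.exp_lt_exp.2 (neg_lt_neg this)
    simp only [cheG]; linarith

lemma cheS_contOn {α : ℝ} (hα : 1 < α) (R : ℝ) : ContinuousOn (cheS α) (Icc 0 R) := by
  have h1 : Summable (fun n : ℕ => R * ((n : ℝ) + 1) ^ (-α)) := by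
    have h2 : Summable (fun n : ℕ => ((n + 1 : ℕ) : ℝ) ^ (-α)) :=
      (summable_nat_add_iff 1).2 (Real.summable_nat_rpow.2 (by linarith))
    have := h2.mul_left R
    convert this using 2 with n
    push_cast
    rfl
    simp
  have key : TendstoUniformlyOn
      (fun (t : Finset ℕ) (lam : ℝ) => ∑ n ∈ t, cheG α lam ((n : ℝ) + 1))
      (cheS α) atTop (Icc 0 R) := by
    apply tendstoUniformlyOn_tsum h1
    intro n lam hlam
    have hl0 : 0 ≤ lam := hlam.1
    have hc : (0:ℝ) ≤ ((n : ℝ) + 1) ^ (-α) := by positivity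
    rw [Real.norm_eq_abs, abs_of_nonneg (cheG_nonneg hl0 (by positivity))]
    calc cheG α lam ((n : ℝ) + 1) ≤ lam * ((n : ℝ) + 1) ^ (-α) := cheG_le
      _ ≤ R * ((n : ℝ) + 1) ^ (-α) := mul_le_mul_of_nonneg_right hlam.2 hc
  apply key.continuousOn
  refine Frequently.of_forall fun t => ?_
  apply Continuous.continuousOn
  apply continuous_finset_sum t fun n _ => ?_
  unfold cheG
  fun_prop

lemma che_exp_int (w : ℝ) (hw : 0 < w) :
    ∫ s in Ioo (0:ℝ) w, Real.exp (-s) = 1 - Real.exp (-w) := by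
  rw [← integral_Ioc_eq_integral_Ioo, ← intervalIntegral.integral_of_le hw.le]
  rw [intervalIntegral.integral_comp_neg (fun x => Real.exp x), integral_exp]
  simp

lemma che_key_lintegral {α lam : ℝ} (hα : 1 < α) (hl : 0 < lam) :
    ∫⁻ x in Ioi (0:ℝ), ENNReal.ofReal (cheG α lam x) =
      ENNReal.ofReal (lam ^ α⁻¹ * Real.Gamma (1 - α⁻¹)) := by
  have hα0 : (0:ℝ) < α := by linarith
  have hβ : (0:ℝ) < 1 - α⁻¹ := by
    have := inv_lt_one_of_one_lt₀ hα; linarith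
  set F : ℝ → ℝ → ℝ≥0∞ := fun x s =>
    (Ioo (0:ℝ) (lam * x ^ (-α))).indicator (fun s => ENNReal.ofReal (Real.exp (-s))) s with hF
  have stepA : ∀ x ∈ Ioi (0:ℝ),
      ENNReal.ofReal (cheG α lam x) = ∫⁻ s, F x s := by
    intro x hx
    have hx0 : (0:ℝ) < x := hx
    have hw : 0 < lam * x ^ (-α) := by positivity
    rw [hF]
    simp only
    rw [lintegral_indicator measurableSet_Ioo]
    rw [← ofReal_integral_eq_lintegral_ofReal]
    · rw [che_exp_int _ hw, cheG]
    · exact (continuous_exp.comp continuous_neg).integrableOn_Icc.mono_set Set.Ioo_subset_Icc_self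
    · filter_upwards with s using (exp_pos _).le
  have hmeas : Measurable (Function.uncurry F) := by
    have h1 : Function.uncurry F = ({p : ℝ × ℝ | 0 < p.2 ∧ p.2 < lam * p.1 ^ (-α)}).indicator
        (fun p => ENNReal.ofReal (Real.exp (-p.2))) := by
      ext p
      by_cases h : p.2 ∈ Ioo (0:ℝ) (lam * p.1 ^ (-α))
      · rw [Function.uncurry_apply_pair, hF]
        simp only [indicator_of_mem h]
        rw [indicator_of_mem]
        exact ⟨h.1, h.2⟩
      · rw [Function.uncurry_apply_pair, hF]
        simp only [indicator_of_notMem h]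
        rw [indicator_of_notMem]
        intro hc; exact h ⟨hc.1, hc.2⟩
    rw [h1]
    apply Measurable.indicator
    · fun_prop
    · exact (measurableSet_lt measurable_const measurable_snd).inter
        (measurableSet_lt measurable_snd (by fun_prop))
  have inner : ∀ s : ℝ, ∫⁻ x in Ioi (0:ℝ), F x s =
      (Ioi (0:ℝ)).indicator
        (fun s => ENNReal.ofReal (lam ^ α⁻¹ * (Real.exp (-s) * s ^ (1 - α⁻¹ - 1)))) s := by
    intro s
    rcases le_or_gt s 0 with hs | hs
    · rw [indicator_of_notMem (by simpa using hs)]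
      have : ∀ x, F x s = 0 := by
        intro x
        rw [hF]
        exact indicator_of_notMem (fun hc => absurd hc.1 (not_lt.2 hs)) _
      simp [this]
    · rw [indicator_of_mem (mem_Ioi.2 hs)]
      set b : ℝ := (lam / s) ^ α⁻¹ with hb
      have hbpos : 0 < b := by positivity
      have hcong : ∀ x ∈ Ioi (0:ℝ), F x s =
          (Iio b).indicator (fun _ => ENNReal.ofReal (Real.exp (-s))) x := by
        intro x hx
        have hx0 : (0:ℝ) < x := hx
        have hiff : s ∈ Ioo (0:ℝ) (lam * x ^ (-α)) ↔ x ∈ Iio b := by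
          rw [mem_Ioo, mem_Iio, hb]
          constructor
          · rintro ⟨-, h2⟩
            rw [lt_rpow_inv_iff_of_pos hx0.le (by positivity) hα0]
            rw [rpow_neg hx0.le] at h2
            rw [lt_div_iff₀ hs]
            calc x ^ α * s = s * x ^ α := by ring
              _ < lam := by
                  rw [← lt_div_iff₀ (rpow_pos_of_pos hx0 α)] at *
                  · rw [div_eq_mul_inv]; exact h2
          · intro h
            refine ⟨hs, ?_⟩
            rw [lt_rpow_inv_iff_of_pos hx0.le (by positivity) hα0] at h
            rw [rpow_neg hx0.le, ← div_eq_mul_inv, lt_div_iff₀ (rpow_pos_of_pos hx0 α)]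
            rw [lt_div_iff₀ hs] at h
            calc s * x ^ α = x ^ α * s := by ring
              _ < lam := h
        simp only [hF]
        by_cases h : s ∈ Ioo (0:ℝ) (lam * x ^ (-α))
        · rw [indicator_of_mem h, indicator_of_mem (hiff.1 h)]
        · rw [indicator_of_notMem h, indicator_of_notMem (fun hc => h (hiff.2 hc))]
      rw [setLIntegral_congr_fun measurableSet_Ioi hcong]
      rw [lintegral_indicator measurableSet_Iio, Measure.restrict_restrict measurableSet_Iio]
      rw [setLIntegral_const]
      have : Iio b ∩ Ioi (0:ℝ) = Ioo 0 b := by rw [inter_comm, Ioi_inter_Iio]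
      rw [this, Real.volume_Ioo, sub_zero]
      rw [← ENNReal.ofReal_mul (exp_pos _).le]
      congr 1
      rw [hb, div_rpow hl.le hs.le]
      rw [show (1 - α⁻¹ - 1 : ℝ) = -α⁻¹ by ring, rpow_neg hs.le]
      field_simp
  calc ∫⁻ x in Ioi (0:ℝ), ENNReal.ofReal (cheG α lam x)
      = ∫⁻ x in Ioi (0:ℝ), ∫⁻ s, F x s := by
        exact setLIntegral_congr_fun measurableSet_Ioi stepA
    _ = ∫⁻ s, ∫⁻ x in Ioi (0:ℝ), F x s := lintegral_lintegral_swap hmeas.aemeasurable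
    _ = ∫⁻ s in Ioi (0:ℝ),
          ENNReal.ofReal (lam ^ α⁻¹ * (Real.exp (-s) * s ^ (1 - α⁻¹ - 1))) := by
        simp_rw [inner]
        rw [lintegral_indicator measurableSet_Ioi]
    _ = ENNReal.ofReal (lam ^ α⁻¹ * Real.Gamma (1 - α⁻¹)) := by
        rw [← ofReal_integral_eq_lintegral_ofReal]
        · rw [MeasureTheory.integral_const_mul, ← Real.Gamma_eq_integral hβ]
        · exact (Real.GammaIntegral_convergent hβ).const_mul _
        · filter_upwards [ae_restrict_mem measurableSet_Ioi] with s hs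
          have : (0:ℝ) < s := hs
          positivity

lemma che_integrableOn {α lam : ℝ} (hα : 1 < α) (hl : 0 < lam) :
    IntegrableOn (cheG α lam) (Ioi (0:ℝ)) := by
  have hm : Measurable (cheG α lam) := by unfold cheG; fun_prop
  have hnn : 0 ≤ᵐ[volume.restrict (Ioi (0:ℝ))] cheG α lam := by
    filter_upwards [ae_restrict_mem measurableSet_Ioi] with x hx
    exact cheG_nonneg hl.le (le_of_lt hx)
  refine ⟨hm.aestronglyMeasurable, ?_⟩
  rw [hasFiniteIntegral_iff_ofReal hnn, che_key_lintegral hα hl]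
  exact ENNReal.ofReal_lt_top

lemma che_integral {α lam : ℝ} (hα : 1 < α) (hl : 0 < lam) :
    ∫ x in Ioi (0:ℝ), cheG α lam x = lam ^ α⁻¹ * Real.Gamma (1 - α⁻¹) := by
  have hβ : (0:ℝ) < 1 - α⁻¹ := by
    have := inv_lt_one_of_one_lt₀ hα; linarith
  have hm : Measurable (cheG α lam) := by unfold cheG; fun_prop
  have hnn : 0 ≤ᵐ[volume.restrict (Ioi (0:ℝ))] cheG α lam := by
    filter_upwards [ae_restrict_mem measurableSet_Ioi] with x hx
    exact cheG_nonneg hl.le (le_of_lt hx)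
  rw [MeasureTheory.integral_eq_lintegral_of_nonneg_ae hnn hm.aestronglyMeasurable]
  rw [che_key_lintegral hα hl, ENNReal.toReal_ofReal]
  have := Real.Gamma_pos_of_pos hβ
  positivity

lemma che_upper {α lam : ℝ} (hα : 1 < α) (hl : 0 < lam) :
    cheS α lam ≤ lam ^ α⁻¹ * Real.Gamma (1 - α⁻¹) := by
  have hα0 : (0:ℝ) < α := by linarith
  apply Real.tsum_le_of_sum_range_le (fun i => cheG_nonneg hl.le (by positivity))
  intro n
  set g' : ℝ → ℝ := fun x => if x ≤ 0 then 1 else cheG α lam x with hg'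
  have hant : AntitoneOn g' (Icc (0:ℝ) (0 + n)) := by
    intro x hx y hy hxy
    by_cases hy0 : y ≤ 0
    · have hx0 : x ≤ 0 := le_trans hxy hy0
      simp [hg', hx0, hy0]
    · push_neg at hy0
      by_cases hx0 : x ≤ 0
      · simp only [hg', hx0, if_true, if_neg (not_le.2 hy0)]
        exact cheG_le_one
      · push_neg at hx0
        simp only [hg', if_neg (not_le.2 hy0), if_neg (not_le.2 hx0)]
        exact cheG_antitone hα0 hl.le hx0 hxy
  have hsum := hant.sum_le_integral
  have hL : ∑ i ∈ Finset.range n, g' ((0:ℝ) + (i + 1 : ℕ)) =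
      ∑ i ∈ Finset.range n, cheG α lam ((i : ℝ) + 1) := by
    apply Finset.sum_congr rfl
    intro i _
    have h1 : ((0:ℝ) + ((i + 1 : ℕ) : ℝ)) = (i : ℝ) + 1 := by push_cast; ring
    rw [h1, hg']
    simp only [if_neg (not_le.2 (by positivity : (0:ℝ) < (i:ℝ) + 1))]
  rw [hL] at hsum
  have hR : ∫ x in (0:ℝ)..(0 + n), g' x ≤ lam ^ α⁻¹ * Real.Gamma (1 - α⁻¹) := by
    rw [intervalIntegral.integral_of_le (by positivity)]
    have heq : ∫ x in Ioc (0:ℝ) (0 + n), g' x = ∫ x in Ioc (0:ℝ) (0 + n), cheG α lam x := by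
      apply setIntegral_congr_fun measurableSet_Ioc
      intro x hx
      simp [hg', not_le.2 hx.1]
    rw [heq]
    have hsub : ∫ x in Ioc (0:ℝ) (0 + n), cheG α lam x ≤ ∫ x in Ioi (0:ℝ), cheG α lam x := by
      apply setIntegral_mono_set (che_integrableOn hα hl)
      · filter_upwards [ae_restrict_mem measurableSet_Ioi] with x hx
        exact cheG_nonneg hl.le (le_of_lt hx)
      · exact HasSubset.Subset.eventuallyLE Ioc_subset_Ioi_self
    rw [che_integral hα hl] at hsub
    exact hsub
  exact le_trans hsum hR

lemma che_lower {α lam : ℝ} (hα : 1 < α) (hl : 0 < lam) :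
    lam ^ α⁻¹ * Real.Gamma (1 - α⁻¹) - 1 ≤ cheS α lam := by
  have hα0 : (0:ℝ) < α := by linarith
  -- split the integral
  have hsplit : lam ^ α⁻¹ * Real.Gamma (1 - α⁻¹) =
      (∫ x in Ioc (0:ℝ) 1, cheG α lam x) + ∫ x in Ioi (1:ℝ), cheG α lam x := by
    rw [← che_integral hα hl, ← Ioc_union_Ioi_eq_Ioi (zero_le_one (α := ℝ))]
    rw [setIntegral_union (Ioc_disjoint_Ioi le_rfl) measurableSet_Ioi
      ((che_integrableOn hα hl).mono_set (by
        rw [← Ioc_union_Ioi_eq_Ioi (zero_le_one (α := ℝ))]; exact subset_union_left))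
      ((che_integrableOn hα hl).mono_set (by
        rw [← Ioc_union_Ioi_eq_Ioi (zero_le_one (α := ℝ))]; exact subset_union_right))]
  have hI1 : ∫ x in Ioc (0:ℝ) 1, cheG α lam x ≤ 1 := by
    have hint : IntegrableOn (cheG α lam) (Ioc (0:ℝ) 1) :=
      (che_integrableOn hα hl).mono_set Ioc_subset_Ioi_self
    calc ∫ x in Ioc (0:ℝ) 1, cheG α lam x ≤ ∫ _x in Ioc (0:ℝ) 1, (1:ℝ) := by
          apply setIntegral_mono_on hint (integrableOn_const (by simp) (by simp))
            measurableSet_Ioc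
          intro x _
          exact cheG_le_one
      _ = 1 := by simp
  have hI2 : ∫ x in Ioi (1:ℝ), cheG α lam x ≤ cheS α lam := by
    have key : ∀ n : ℕ, ∫ x in Ioc (1:ℝ) (1 + n), cheG α lam x ≤ cheS α lam := by
      intro n
      have hant : AntitoneOn (cheG α lam) (Icc (1:ℝ) (1 + n)) := by
        intro x hx y _ hxy
        exact cheG_antitone hα0 hl.le (lt_of_lt_of_le zero_lt_one hx.1) hxy
      have h2 := hant.integral_le_sum
      rw [intervalIntegral.integral_of_le
        (by have : (0:ℝ) ≤ n := Nat.cast_nonneg n; linarith : (1:ℝ) ≤ 1 + n)] at h2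
      refine le_trans h2 ?_
      have hL : ∑ i ∈ Finset.range n, cheG α lam ((1:ℝ) + i) =
          ∑ i ∈ Finset.range n, cheG α lam ((i : ℝ) + 1) := by
        apply Finset.sum_congr rfl
        intro i _
        rw [add_comm]
      rw [hL]
      exact Summable.sum_le_tsum _ (fun i _ => cheG_nonneg hl.le (by positivity))
        (che_summable hα hl.le)
    have hmono : Monotone (fun n : ℕ => Ioc (1:ℝ) (1 + n)) := by
      intro m n hmn
      apply Ioc_subset_Ioc le_rfl
      have : (m : ℝ) ≤ n := Nat.cast_le.2 hmn
      linarith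
    have hun : ⋃ n : ℕ, Ioc (1:ℝ) (1 + n) = Ioi 1 := by
      ext z
      simp only [mem_iUnion, mem_Ioc, mem_Ioi]
      constructor
      · rintro ⟨n, h1, -⟩; exact h1
      · intro hz
        obtain ⟨n, hn⟩ := exists_nat_ge (z - 1)
        exact ⟨n, hz, by linarith⟩
    have hint : IntegrableOn (cheG α lam) (⋃ n : ℕ, Ioc (1:ℝ) (1 + n)) := by
      rw [hun]
      exact (che_integrableOn hα hl).mono_set (Ioi_subset_Ioi zero_le_one)
    have htend := tendsto_setIntegral_of_monotone (fun n => measurableSet_Ioc) hmono hint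
    rw [hun] at htend
    exact le_of_tendsto htend (Filter.Eventually.of_forall key)
  linarith

lemma che_tendsto {α : ℝ} (hα : 1 < α) :
    Tendsto (fun l => cheS α l / (l ^ α⁻¹ * Real.Gamma (1 - α⁻¹))) atTop (nhds 1) := by
  have hβ : (0:ℝ) < 1 - α⁻¹ := by
    have := inv_lt_one_of_one_lt₀ hα; linarith
  have hΓ : 0 < Real.Gamma (1 - α⁻¹) := Real.Gamma_pos_of_pos hβ
  have hI : Tendsto (fun l : ℝ => l ^ α⁻¹ * Real.Gamma (1 - α⁻¹)) atTop atTop :=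
    (tendsto_rpow_atTop (by positivity)).atTop_mul_const hΓ
  have hlow : Tendsto (fun l : ℝ => 1 - (l ^ α⁻¹ * Real.Gamma (1 - α⁻¹))⁻¹) atTop (nhds 1) := by
    have := tendsto_const_nhds (α := ℝ) (x := (1:ℝ)) (f := atTop (α := ℝ)) |>.sub
      hI.inv_tendsto_atTop
    simpa using this
  apply tendsto_of_tendsto_of_tendsto_of_le_of_le' hlow tendsto_const_nhds
  · filter_upwards [eventually_gt_atTop 0, hI.eventually_gt_atTop 0] with l hl hIl
    have h1 := che_lower hα hl
    calc 1 - (l ^ α⁻¹ * Real.Gamma (1 - α⁻¹))⁻¹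
        = (l ^ α⁻¹ * Real.Gamma (1 - α⁻¹) - 1) / (l ^ α⁻¹ * Real.Gamma (1 - α⁻¹)) := by
          rw [sub_div, div_self hIl.ne', one_div]
      _ ≤ cheS α l / (l ^ α⁻¹ * Real.Gamma (1 - α⁻¹)) := by gcongr
  · filter_upwards [eventually_gt_atTop 0, hI.eventually_gt_atTop 0] with l hl hIl
    exact (div_le_one hIl).2 (che_upper hα hl)

/-- Characteristic time: for `q i = c i^{-α}` (`α > 1`, `c > 0`), for each `x > 0` there is
a unique `t > 0` with `∑_i (1 - e^{-q_i t}) = x`, and any such solution `t_C(x)` satisfies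
`t_C(x) ~ x^α / (c Γ(1-1/α)^α)` as `x → ∞`. -/
theorem stmt12 (c α : ℝ) (hc : 0 < c) (hα : 1 < α)
    (q : ℕ → ℝ) (hq : ∀ i : ℕ, 1 ≤ i → q i = c * (i : ℝ) ^ (-α)) :
    (∀ x : ℝ, 0 < x → ∃! t : ℝ,
        0 < t ∧ (∑' i : ℕ, (1 - Real.exp (-(q (i + 1)) * t))) = x) ∧
    (∀ tC : ℝ → ℝ,
      (∀ x : ℝ, 0 < x →
        0 < tC x ∧ (∑' i : ℕ, (1 - Real.exp (-(q (i + 1)) * tC x))) = x) →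
      Tendsto (fun x : ℝ =>
          tC x / (x ^ α / (c * Real.Gamma (1 - 1 / α) ^ α)))
        atTop (nhds 1)) := by
  have hα0 : (0:ℝ) < α := by linarith
  have hβ : (0:ℝ) < 1 - α⁻¹ := by
    have := inv_lt_one_of_one_lt₀ hα; linarith
  set Γv : ℝ := Real.Gamma (1 - α⁻¹) with hΓv
  have hΓ : 0 < Γv := Real.Gamma_pos_of_pos hβ
  have hsum_eq : ∀ t : ℝ, (∑' i : ℕ, (1 - Real.exp (-(q (i + 1)) * t))) = cheS α (c * t) := by
    intro t
    unfold cheS cheG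
    apply tsum_congr
    intro i
    have h1 : -(q (i + 1)) * t = -(c * t * ((i : ℝ) + 1) ^ (-α)) := by
      rw [hq (i + 1) (by omega)]
      push_cast
      ring
    rw [h1]
  constructor
  · -- existence and uniqueness
    intro x hx
    set R : ℝ := ((x + 1) / Γv) ^ α with hR
    have hR0 : 0 < R := by positivity
    have hRinv : R ^ α⁻¹ = (x + 1) / Γv := Real.rpow_rpow_inv (by positivity) hα0.ne'
    have hSR : x ≤ cheS α R := by
      have h1 := che_lower hα hR0
      rw [hRinv, div_mul_cancel₀ _ hΓ.ne'] at h1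
      linarith
    have hmem : x ∈ Icc (cheS α 0) (cheS α R) := by
      rw [cheS_zero]
      exact ⟨hx.le, hSR⟩
    obtain ⟨lam, hlamIcc, hlameq⟩ := intermediate_value_Icc hR0.le (cheS_contOn hα R) hmem
    have hlam0 : 0 < lam := by
      rcases eq_or_lt_of_le hlamIcc.1 with h | h
      · exfalso
        rw [← h, cheS_zero] at hlameq
        exact hx.ne' hlameq.symm
      · exact h
    refine ⟨lam / c, ⟨by positivity, ?_⟩, ?_⟩
    · rw [hsum_eq]
      have : c * (lam / c) = lam := by field_simp
      rw [this, hlameq]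
    · rintro t' ⟨ht'0, ht'eq⟩
      rw [hsum_eq] at ht'eq
      have h1 : c * t' = lam := by
        by_contra hne
        rcases lt_or_gt_of_ne hne with h | h
        · have := cheS_lt hα (by positivity : (0:ℝ) ≤ c * t') h
          rw [ht'eq, hlameq] at this
          exact lt_irrefl x this
        · have := cheS_lt hα hlam0.le h
          rw [ht'eq, hlameq] at this
          exact lt_irrefl x this
      rw [eq_div_iff hc.ne']
      linarith [h1]
  · -- asymptotics
    intro tC htC
    set L : ℝ → ℝ := fun x => c * tC x with hL
    have hLpos : ∀ x : ℝ, 0 < x → 0 < L x := fun x hx => by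
      have := (htC x hx).1; positivity
    have hLeq : ∀ x : ℝ, 0 < x → cheS α (L x) = x := fun x hx => by
      rw [hL, ← hsum_eq]
      exact (htC x hx).2
    have htendL : Tendsto L atTop atTop := by
      apply tendsto_atTop_mono' atTop ?_ ?_
      · exact fun x => (x / Γv) ^ α
      · filter_upwards [eventually_gt_atTop 0] with x hx
        have h1 := che_upper hα (hLpos x hx)
        rw [hLeq x hx] at h1
        have h2 : x / Γv ≤ (L x) ^ α⁻¹ := by
          rw [div_le_iff₀ hΓ]
          exact h1
        calc (x / Γv) ^ α ≤ ((L x) ^ α⁻¹) ^ α :=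
              Real.rpow_le_rpow (by positivity) h2 hα0.le
          _ = L x := Real.rpow_inv_rpow (hLpos x hx).le hα0.ne'
      · apply (tendsto_rpow_atTop hα0).comp
        exact Tendsto.atTop_div_const hΓ tendsto_id
    have hratio : Tendsto (fun l : ℝ => (l ^ α⁻¹ * Γv / cheS α l) ^ α) atTop (nhds 1) := by
      have h0 := che_tendsto hα
      have h1 : Tendsto (fun l : ℝ => (cheS α l / (l ^ α⁻¹ * Γv))⁻¹) atTop (nhds 1) := by
        have := h0.inv₀ one_ne_zero
        simpa using this
      have h2 : Tendsto (fun l : ℝ => l ^ α⁻¹ * Γv / cheS α l) atTop (nhds 1) := by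
        simpa [inv_div] using h1
      have h3 : ContinuousAt (fun y : ℝ => y ^ α) 1 :=
        Real.continuousAt_rpow_const 1 α (Or.inl one_ne_zero)
      have h4 := h3.tendsto.comp h2
      rw [Real.one_rpow] at h4
      exact h4
    have hfinal := hratio.comp htendL
    apply hfinal.congr'
    filter_upwards [eventually_gt_atTop 0] with x hx
    have hxne : x ^ α ≠ 0 := (Real.rpow_pos_of_pos hx α).ne'
    have e1 : cheS α (L x) = x := hLeq x hx
    have e2 : ((L x) ^ α⁻¹ * Γv / x) ^ α = L x * Γv ^ α / x ^ α := by
      rw [Real.div_rpow (mul_nonneg (Real.rpow_nonneg (hLpos x hx).le _) hΓ.le) hx.le,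
        Real.mul_rpow (Real.rpow_nonneg (hLpos x hx).le _) hΓ.le,
        Real.rpow_inv_rpow (hLpos x hx).le hα0.ne']
    have e3 : tC x / (x ^ α / (c * Real.Gamma (1 - 1 / α) ^ α)) = L x * Γv ^ α / x ^ α := by
      rw [one_div, ← hΓv, hL]
      field_simp
    simp only [Function.comp_apply]
    rw [e1, e2, e3]
end

section
/- Fix α > 1, c > 0, δ > 0, and a sequence p_i ~ c/i^α with 0 ≤ p_i < 1. Then lim_{x→∞} [Σ_{i=1}^∞ (1 - e^{-(1+δ) p_i x})] / [Σ_{i=1}^∞ (1 - e^{-p_i x})] = (1+δ)^{1/α}. -/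
open Filter Real MeasureTheory Set

/-- The function under the integral/sum. -/
noncomputable def phiF (α y t : ℝ) : ℝ := 1 - Real.exp (-(y * t ^ (-α)))

lemma phiF_nonneg {α y : ℝ} (hy : 0 ≤ y) {t : ℝ} (ht : 0 ≤ t) : 0 ≤ phiF α y t := by
  have h1 : y * t ^ (-α) ≥ 0 := mul_nonneg hy (Real.rpow_nonneg ht _)
  have := Real.exp_le_one_iff.mpr (by linarith : -(y * t ^ (-α)) ≤ 0)
  simp only [phiF]; linarith

lemma phiF_le_one {α y t : ℝ} : phiF α y t ≤ 1 := by
  have := Real.exp_pos (-(y * t ^ (-α)))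
  simp only [phiF]; linarith

lemma phiF_le_lin {α y : ℝ} (t : ℝ) : phiF α y t ≤ y * t ^ (-α) := by
  have := Real.add_one_le_exp (-(y * t ^ (-α)))
  simp only [phiF]; linarith

lemma phiF_meas (α y : ℝ) : Measurable (phiF α y) := by
  unfold phiF
  fun_prop

lemma phiF_integrable {α : ℝ} (hα : 1 < α) {y : ℝ} (hy : 0 ≤ y) :
    IntegrableOn (phiF α y) (Ioi (0:ℝ)) := by
  rw [← Set.Ioc_union_Ioi_eq_Ioi (zero_le_one : (0:ℝ) ≤ 1)]
  apply IntegrableOn.union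
  · apply Measure.integrableOn_of_bounded (M := 1)
    · simp [Real.volume_Ioc]
    · exact (phiF_meas α y).aestronglyMeasurable
    · filter_upwards [ae_restrict_mem measurableSet_Ioc] with t ht
      rw [Real.norm_eq_abs, abs_le]
      constructor
      · linarith [phiF_nonneg (α := α) hy ht.1.le]
      · exact phiF_le_one
  · apply Integrable.mono' (g := fun t => y * t ^ (-α))
    · exact ((integrableOn_Ioi_rpow_of_lt (by linarith : -α < -1) one_pos).const_mul y)
    · exact (phiF_meas α y).aestronglyMeasurable
    · filter_upwards [ae_restrict_mem measurableSet_Ioi] with t ht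
      rw [Real.norm_eq_abs, abs_of_nonneg (phiF_nonneg hy (by linarith [ht.out] : (0:ℝ) ≤ t))]
      exact phiF_le_lin t

/-- The limiting constant integral. -/
noncomputable def II (α : ℝ) : ℝ := ∫ t in Ioi (0:ℝ), phiF α 1 t

lemma II_pos {α : ℝ} (hα : 1 < α) : 0 < II α := by
  rw [II, setIntegral_pos_iff_support_of_nonneg_ae]
  · apply lt_of_lt_of_le _ (measure_mono (?_ : Ioi (1:ℝ) ⊆ _))
    · rw [Real.volume_Ioi]; exact ENNReal.zero_lt_top
    · intro t ht
      refine ⟨?_, by exact lt_trans one_pos (mem_Ioi.mp ht)⟩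
      have htpos : (0:ℝ) < t := lt_trans one_pos ht
      have : Real.exp (-(1 * t ^ (-α))) < 1 := by
        rw [Real.exp_lt_one_iff]
        have := Real.rpow_pos_of_pos htpos (-α)
        nlinarith
      simp only [Function.mem_support, phiF]
      intro h; nlinarith
  · filter_upwards [ae_restrict_mem measurableSet_Ioi] with t ht
    exact phiF_nonneg zero_le_one ht.out.le
  · exact phiF_integrable hα zero_le_one


lemma phiF_scaling {α : ℝ} (hα : 1 < α) {y : ℝ} (hy : 0 < y) :
    ∫ t in Ioi (0:ℝ), phiF α y t = y ^ (1/α) * II α := by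
  set b : ℝ := y ^ (-(1/α)) with hb
  have hbpos : 0 < b := Real.rpow_pos_of_pos hy _
  have hbpow : b ^ (-α) = y := by
    rw [hb, ← Real.rpow_mul hy.le, show -(1/α) * -α = 1 by field_simp]
    exact Real.rpow_one y
  have key : ∀ t ∈ Ioi (0:ℝ), phiF α y t = phiF α 1 (b * t) := by
    intro t ht
    simp only [phiF, one_mul]
    rw [Real.mul_rpow hbpos.le (le_of_lt ht), hbpow]
  rw [setIntegral_congr_fun measurableSet_Ioi key]
  have := MeasureTheory.integral_comp_mul_left_Ioi (phiF α 1) 0 hbpos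
  rw [mul_zero] at this
  rw [this, smul_eq_mul, ← II]
  congr 1
  rw [hb, Real.rpow_neg hy.le, inv_inv]
-- modified function, antitone on [0, ∞)
noncomputable def phiH (α y t : ℝ) : ℝ := if t ≤ 0 then 1 else phiF α y t

lemma phiH_anti {α y : ℝ} (hα : 1 < α) (hy : 0 ≤ y) (s : Set ℝ) :
    AntitoneOn (phiH α y) s := by
  intro a _ b _ hab
  by_cases hb : b ≤ 0
  · have ha : a ≤ 0 := le_trans hab hb
    simp [phiH, ha, hb]
  · by_cases ha : a ≤ 0
    · simp only [phiH, ha, if_true, hb, if_false]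
      exact phiF_le_one
    · push_neg at ha hb
      simp only [phiH, not_le.mpr ha, not_le.mpr hb, if_false]
      have h1 : b ^ (-α) ≤ a ^ (-α) :=
        Real.rpow_le_rpow_of_nonpos ha hab (by linarith)
      have h2 : y * b ^ (-α) ≤ y * a ^ (-α) := by nlinarith
      simp only [phiF, sub_le_sub_iff_left]
      exact Real.exp_le_exp.mpr (by linarith)


lemma summable_phiF {α : ℝ} (hα : 1 < α) {y : ℝ} (hy : 0 ≤ y) :
    Summable (fun i : ℕ => phiF α y ((i:ℝ)+1)) := by
  have hs : Summable (fun i : ℕ => y * ((i:ℝ)+1) ^ (-α)) := by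
    apply Summable.mul_left
    have := (Real.summable_nat_rpow (p := -α)).mpr (by linarith)
    have h2 := (summable_nat_add_iff (f := fun n : ℕ => (n:ℝ) ^ (-α)) 1).mpr this
    convert h2 using 2 with i
    all_goals (push_cast; rfl)
  exact Summable.of_nonneg_of_le
    (fun i => phiF_nonneg hy (by positivity))
    (fun i => phiF_le_lin _) hs

lemma sum_upper {α : ℝ} (hα : 1 < α) {y : ℝ} (hy : 0 < y) :
    ∑' i : ℕ, phiF α y ((i:ℝ)+1) ≤ y ^ (1/α) * II α := by
  apply tsum_le_of_sum_range_le (fun i => phiF_nonneg hy.le (by positivity))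
  intro n
  have h1 : ∑ i ∈ Finset.range n, phiF α y ((i:ℝ)+1)
      = ∑ i ∈ Finset.range n, phiH α y ((0:ℝ) + (i + 1 : ℕ)) := by
    apply Finset.sum_congr rfl
    intro i _
    have : ((0:ℝ) + ((i+1:ℕ):ℝ)) = (i:ℝ)+1 := by push_cast; ring
    rw [this, phiH, if_neg (not_le.mpr (by positivity))]
  rw [h1]
  calc ∑ i ∈ Finset.range n, phiH α y ((0:ℝ) + (i + 1 : ℕ))
      ≤ ∫ x in (0:ℝ)..((0:ℝ) + n), phiH α y x :=
        AntitoneOn.sum_le_integral (phiH_anti hα hy.le _)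
    _ = ∫ x in Ioc (0:ℝ) n, phiH α y x := by
        rw [zero_add, intervalIntegral.integral_of_le (by positivity)]
    _ = ∫ x in Ioc (0:ℝ) n, phiF α y x := by
        apply setIntegral_congr_fun measurableSet_Ioc
        intro t ht
        rw [phiH, if_neg (not_le.mpr ht.1)]
    _ ≤ ∫ x in Ioi (0:ℝ), phiF α y x := by
        apply setIntegral_mono_set (phiF_integrable hα hy.le)
        · filter_upwards [ae_restrict_mem measurableSet_Ioi] with t ht
          exact phiF_nonneg hy.le ht.out.le
        · exact HasSubset.Subset.eventuallyLE Ioc_subset_Ioi_self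
    _ = y ^ (1/α) * II α := phiF_scaling hα hy

lemma sum_lower {α : ℝ} (hα : 1 < α) {y : ℝ} (hy : 0 < y) :
    y ^ (1/α) * II α - 1 ≤ ∑' i : ℕ, phiF α y ((i:ℝ)+1) := by
  have hint := phiF_integrable hα (α := α) hy.le
  -- integral over Ioi 1 is a lower bound for the tsum
  have h1 : ∀ n : ℕ, ∫ x in Ioc (1:ℝ) (1+n), phiF α y x ≤ ∑' i : ℕ, phiF α y ((i:ℝ)+1) := by
    intro n
    have hle : (∫ x in (1:ℝ)..((1:ℝ) + n), phiH α y x)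
        ≤ ∑ i ∈ Finset.range n, phiH α y ((1:ℝ) + i) :=
      AntitoneOn.integral_le_sum (phiH_anti hα hy.le _)
    have e1 : (∫ x in (1:ℝ)..((1:ℝ) + n), phiH α y x) = ∫ x in Ioc (1:ℝ) (1+n), phiF α y x := by
      rw [intervalIntegral.integral_of_le (by linarith [Nat.cast_nonneg (α := ℝ) n])]
      apply setIntegral_congr_fun measurableSet_Ioc
      intro t ht
      rw [phiH, if_neg (by nlinarith [ht.1])]
    have e2 : ∑ i ∈ Finset.range n, phiH α y ((1:ℝ) + i)
        = ∑ i ∈ Finset.range n, phiF α y ((i:ℝ)+1) := by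
      apply Finset.sum_congr rfl
      intro i _
      rw [phiH, if_neg (not_le.mpr (by positivity)), add_comm]
    calc ∫ x in Ioc (1:ℝ) (1+n), phiF α y x = _ := e1.symm
      _ ≤ _ := hle
      _ = ∑ i ∈ Finset.range n, phiF α y ((i:ℝ)+1) := e2
      _ ≤ ∑' i : ℕ, phiF α y ((i:ℝ)+1) :=
          Summable.sum_le_tsum _ (fun i _ => phiF_nonneg hy.le (by positivity)) (summable_phiF hα hy.le)
  have hunion : (⋃ n : ℕ, Ioc (1:ℝ) (1+n)) = Ioi 1 := by
    ext t
    simp only [mem_iUnion, mem_Ioc, mem_Ioi]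
    constructor
    · rintro ⟨n, h, _⟩; exact h
    · intro h
      obtain ⟨n, hn⟩ := exists_nat_ge t
      exact ⟨n, h, by linarith⟩
  have h2 : Tendsto (fun n : ℕ => ∫ x in Ioc (1:ℝ) (1+n), phiF α y x) atTop
      (nhds (∫ x in Ioi (1:ℝ), phiF α y x)) := by
    have := tendsto_setIntegral_of_monotone (μ := volume) (f := phiF α y)
      (s := fun n : ℕ => Ioc (1:ℝ) (1+n))
      (fun n => measurableSet_Ioc)
      (fun m n hmn => Ioc_subset_Ioc le_rfl (by have := (Nat.cast_le (α:=ℝ)).mpr hmn; linarith))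
      (by rw [hunion]; exact hint.mono_set (Ioi_subset_Ioi zero_le_one))
    rwa [hunion] at this
  have h3 : ∫ x in Ioi (1:ℝ), phiF α y x ≤ ∑' i : ℕ, phiF α y ((i:ℝ)+1) :=
    le_of_tendsto h2 (Eventually.of_forall h1)
  have h4 : ∫ x in Ioi (0:ℝ), phiF α y x
      = (∫ x in Ioc (0:ℝ) 1, phiF α y x) + ∫ x in Ioi (1:ℝ), phiF α y x := by
    rw [← setIntegral_union (Ioc_disjoint_Ioi le_rfl) measurableSet_Ioi
      (hint.mono_set Ioc_subset_Ioi_self) (hint.mono_set (Ioi_subset_Ioi zero_le_one)),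
      Ioc_union_Ioi_eq_Ioi zero_le_one]
  have h5 : ∫ x in Ioc (0:ℝ) 1, phiF α y x ≤ 1 := by
    have := norm_setIntegral_le_of_norm_le_const (μ := volume) (s := Ioc (0:ℝ) 1) (C := 1) (f := fun x => phiF α y x)
      (by simp [Real.volume_Ioc]) (fun t ht => by
        rw [Real.norm_eq_abs, abs_of_nonneg (phiF_nonneg hy.le ht.1.le)]
        exact phiF_le_one)
    rw [Real.volume_real_Ioc] at this
    simp at this
    calc ∫ x in Ioc (0:ℝ) 1, phiF α y x ≤ |∫ x in Ioc (0:ℝ) 1, phiF α y x| := le_abs_self _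
      _ ≤ 1 := this
  have := phiF_scaling hα (α := α) hy
  linarith

section main
variable {c α : ℝ} {p : ℕ → ℝ}

lemma p_sandwich (hc : 0 < c) (hα : 1 < α)
    (hasymp : Tendsto (fun i : ℕ => p i * (i : ℝ) ^ α) atTop (nhds c))
    {ε : ℝ} (hε : 0 < ε) :
    ∃ N : ℕ, 1 ≤ N ∧ ∀ j : ℕ, N ≤ j →
      (1-ε)*c*(j:ℝ)^(-α) ≤ p j ∧ p j ≤ (1+ε)*c*(j:ℝ)^(-α) := by
  obtain ⟨N₀, hN₀⟩ := (Metric.tendsto_atTop.mp hasymp (ε*c) (by positivity))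
  refine ⟨max N₀ 1, le_max_right _ _, fun j hj => ?_⟩
  have hj1 : 1 ≤ j := le_trans (le_max_right _ _) hj
  have hjpos : (0:ℝ) < (j:ℝ) := by exact_mod_cast hj1
  have hd := hN₀ j (le_trans (le_max_left _ _) hj)
  rw [Real.dist_eq, abs_lt] at hd
  have hA : (0:ℝ) < (j:ℝ) ^ α := Real.rpow_pos_of_pos hjpos _
  have hB : (0:ℝ) < (j:ℝ) ^ (-α) := Real.rpow_pos_of_pos hjpos _
  have hAB : (j:ℝ) ^ α * (j:ℝ) ^ (-α) = 1 := by
    rw [← Real.rpow_add hjpos]; simp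
  constructor
  · have h1 : (1-ε)*c ≤ p j * (j:ℝ) ^ α := by linarith
    calc (1-ε)*c*(j:ℝ)^(-α) ≤ (p j * (j:ℝ)^α) * (j:ℝ)^(-α) := by nlinarith
      _ = p j := by rw [mul_assoc, hAB, mul_one]
  · have h1 : p j * (j:ℝ) ^ α ≤ (1+ε)*c := by linarith
    calc p j = (p j * (j:ℝ)^α) * (j:ℝ)^(-α) := by rw [mul_assoc, hAB, mul_one]
      _ ≤ (1+ε)*c*(j:ℝ)^(-α) := by nlinarith

lemma summable_p (hc : 0 < c) (hα : 1 < α) (hp : ∀ i, 0 ≤ p i)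
    (hasymp : Tendsto (fun i : ℕ => p i * (i : ℝ) ^ α) atTop (nhds c)) :
    Summable p := by
  obtain ⟨N, hN1, hN⟩ := p_sandwich hc hα hasymp one_pos
  rw [← summable_nat_add_iff N]
  have hs : Summable (fun i : ℕ => (1+1)*c * ((i+N:ℕ):ℝ) ^ (-α)) := by
    apply Summable.mul_left
    exact (summable_nat_add_iff N).mpr ((Real.summable_nat_rpow (p := -α)).mpr (by linarith))
  apply Summable.of_nonneg_of_le (fun i => hp _) (fun i => ?_) hs
  exact (hN (i+N) (Nat.le_add_left _ _)).2

lemma summable_terms (hc : 0 < c) (hα : 1 < α) (hp : ∀ i, 0 ≤ p i)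
    (hasymp : Tendsto (fun i : ℕ => p i * (i : ℝ) ^ α) atTop (nhds c))
    {x : ℝ} (hx : 0 ≤ x) :
    Summable (fun i : ℕ => 1 - Real.exp (-(p (i+1)) * x)) := by
  have hsp : Summable (fun i : ℕ => p (i+1) * x) :=
    (((summable_nat_add_iff 1).mpr (summable_p hc hα hp hasymp)).mul_right x)
  apply Summable.of_nonneg_of_le (fun i => ?_) (fun i => ?_) hsp
  · have : -(p (i+1)) * x ≤ 0 := by
      have := hp (i+1); nlinarith
    have := Real.exp_le_one_iff.mpr this
    linarith
  · have := Real.add_one_le_exp (-(p (i+1)) * x)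
    nlinarith [hp (i+1)]
end main

section main2
variable {c α : ℝ} {p : ℕ → ℝ}

set_option maxHeartbeats 2000000 in
lemma main_asymp (hc : 0 < c) (hα : 1 < α) (hp : ∀ i, 0 ≤ p i)
    (hasymp : Tendsto (fun i : ℕ => p i * (i : ℝ) ^ α) atTop (nhds c)) :
    Tendsto (fun x : ℝ => (∑' i : ℕ, (1 - Real.exp (-(p (i+1)) * x))) / x ^ (1/α)) atTop
      (nhds (c ^ (1/α) * II α)) := by
  have hβ : 0 < 1/α := by positivity
  set L : ℝ := c ^ (1/α) * II α with hL
  rw [Metric.tendsto_atTop]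
  intro η hη
  -- continuity of q ↦ (q*c)^(1/α) * II α at 1
  have hcont : ContinuousAt (fun q : ℝ => (q*c) ^ (1/α) * II α) 1 := by
    apply ContinuousAt.mul _ continuousAt_const
    apply ContinuousAt.rpow_const (by fun_prop)
    left; simpa using hc.ne'
  obtain ⟨ε₀, hε₀, hball⟩ := Metric.continuousAt_iff.mp hcont (η/2) (by positivity)
  set ε : ℝ := min (ε₀/2) (1/2) with hεdef
  have hε : 0 < ε := by positivity
  have hεhalf : ε ≤ 1/2 := min_le_right _ _
  have hεε₀ : ε < ε₀ := lt_of_le_of_lt (min_le_left _ _) (by linarith)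
  have hd1 : dist ((1:ℝ)+ε) 1 < ε₀ := by
    rw [Real.dist_eq, add_sub_cancel_left, abs_of_pos hε]; exact hεε₀
  have hd2 : dist ((1:ℝ)-ε) 1 < ε₀ := by
    rw [Real.dist_eq, show (1-ε) - 1 = -ε by ring, abs_neg, abs_of_pos hε]; exact hεε₀
  have hhi : ((1+ε)*c) ^ (1/α) * II α < L + η/2 := by
    have h := hball hd1
    rw [Real.dist_eq, abs_lt] at h
    simp only [one_mul] at h
    have := h.2
    rw [hL]
    linarith
  have hlo : L - η/2 < ((1-ε)*c) ^ (1/α) * II α := by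
    have h := hball hd2
    rw [Real.dist_eq, abs_lt] at h
    simp only [one_mul] at h
    have := h.1
    rw [hL]
    linarith
  obtain ⟨N, hN1, hN⟩ := p_sandwich hc hα hasymp hε
  -- choose threshold X
  have hxb : Tendsto (fun x : ℝ => x ^ (1/α)) atTop atTop := tendsto_rpow_atTop hβ
  obtain ⟨X, hX⟩ := (eventually_atTop).mp
    ((hxb.eventually_gt_atTop (2*((N:ℝ)+1)/η)).and (eventually_ge_atTop 1))
  refine ⟨X, fun x hx => ?_⟩
  obtain ⟨hxβ, hx1⟩ := hX x hx
  have hxpos : (0:ℝ) < x := lt_of_lt_of_le one_pos hx1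
  have hxβpos : (0:ℝ) < x ^ (1/α) := Real.rpow_pos_of_pos hxpos _
  set xβ := x ^ (1/α) with hxβdef
  have hNxβ : (N:ℝ) + 1 < (η/2) * xβ := by
    rw [div_lt_iff₀ hη] at hxβ
    nlinarith
  -- the sandwich
  set y1 : ℝ := (1-ε)*c*x with hy1
  set y2 : ℝ := (1+ε)*c*x with hy2
  have hy1pos : 0 < y1 := mul_pos (mul_pos (by linarith) hc) hxpos
  have hy2pos : 0 < y2 := mul_pos (mul_pos (by linarith) hc) hxpos
  set T : ℝ := ∑' i : ℕ, (1 - Real.exp (-(p (i+1)) * x)) with hT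
  have hsumT : Summable (fun i : ℕ => 1 - Real.exp (-(p (i+1)) * x)) :=
    summable_terms hc hα hp hasymp hxpos.le
  have hsumS1 : Summable (fun i : ℕ => phiF α y1 ((i:ℝ)+1)) := summable_phiF hα hy1pos.le
  have hsumS2 : Summable (fun i : ℕ => phiF α y2 ((i:ℝ)+1)) := summable_phiF hα hy2pos.le
  -- termwise comparison beyond N
  have hcomp : ∀ i : ℕ, N ≤ i + 1 →
      phiF α y1 ((i:ℝ)+1) ≤ 1 - Real.exp (-(p (i+1)) * x)
        ∧ 1 - Real.exp (-(p (i+1)) * x) ≤ phiF α y2 ((i:ℝ)+1) := by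
    intro i hi
    obtain ⟨hplo, hphi⟩ := hN (i+1) hi
    have hcast : ((i:ℝ)+1) = ((i+1:ℕ):ℝ) := by push_cast; ring
    have hBpos : (0:ℝ) ≤ ((i+1:ℕ):ℝ) ^ (-α) := Real.rpow_nonneg (by positivity) _
    constructor
    · simp only [phiF, sub_le_sub_iff_left, hcast]
      apply Real.exp_le_exp.mpr
      rw [hy1]
      nlinarith
    · simp only [phiF, sub_le_sub_iff_left, hcast]
      apply Real.exp_le_exp.mpr
      rw [hy2]
      nlinarith
  -- upper bound on T
  have hup : T ≤ (N:ℝ) + y2 ^ (1/α) * II α := by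
    have hsplit := (Summable.sum_add_tsum_nat_add N hsumT).symm
    have hhead : ∑ i ∈ Finset.range N, (1 - Real.exp (-(p (i+1)) * x)) ≤ (N:ℝ) := by
      calc ∑ i ∈ Finset.range N, (1 - Real.exp (-(p (i+1)) * x))
          ≤ ∑ _i ∈ Finset.range N, (1:ℝ) := by
            apply Finset.sum_le_sum
            intro i _
            have := Real.exp_pos (-(p (i+1)) * x); linarith
        _ = (N:ℝ) := by simp
    have htail : ∑' i : ℕ, (1 - Real.exp (-(p (i+N+1)) * x))
        ≤ ∑' i : ℕ, phiF α y2 ((i:ℝ)+(N:ℝ)+1) := by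
      have hsa : Summable (fun i : ℕ => 1 - Real.exp (-(p (i+N+1)) * x)) :=
        (summable_nat_add_iff (f := fun i => 1 - Real.exp (-(p (i+1)) * x)) N).mpr hsumT
      have hsb : Summable (fun i : ℕ => phiF α y2 ((i:ℝ)+(N:ℝ)+1)) := by
        have := (summable_nat_add_iff (f := fun i : ℕ => phiF α y2 ((i:ℝ)+1)) N).mpr hsumS2
        apply this.congr
        intro i; push_cast; ring_nf
      apply Summable.tsum_le_tsum (fun i => ?_) hsa hsb
      have h := (hcomp (i+N) (by omega)).2
      push_cast at h ⊢
      convert h using 3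
    have htail2 : ∑' i : ℕ, phiF α y2 ((i:ℝ)+(N:ℝ)+1)
        ≤ ∑' i : ℕ, phiF α y2 ((i:ℝ)+1) := by
      have hsplit2 := (Summable.sum_add_tsum_nat_add N hsumS2).symm
      have hh2 : 0 ≤ ∑ i ∈ Finset.range N, phiF α y2 ((i:ℝ)+1) :=
        Finset.sum_nonneg (fun i _ => phiF_nonneg hy2pos.le (by positivity))
      have : ∑' i : ℕ, phiF α y2 (((i+N:ℕ):ℝ)+1) = ∑' i : ℕ, phiF α y2 ((i:ℝ)+(N:ℝ)+1) := by
        apply tsum_congr; intro i; push_cast; ring_nf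
      try linarith [hsplit2, this]
    have : T = ∑ i ∈ Finset.range N, (1 - Real.exp (-(p (i+1)) * x))
        + ∑' i : ℕ, (1 - Real.exp (-(p (i+N+1)) * x)) := by
      rw [hT, ← hsplit]
    have hS2 := sum_upper hα hy2pos
    linarith
  -- lower bound on T
  have hdown : y1 ^ (1/α) * II α - 1 - (N:ℝ) ≤ T := by
    have hsplit := (Summable.sum_add_tsum_nat_add N hsumT).symm
    have hheadnn : 0 ≤ ∑ i ∈ Finset.range N, (1 - Real.exp (-(p (i+1)) * x)) := by
      apply Finset.sum_nonneg
      intro i _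
      have : -(p (i+1)) * x ≤ 0 := by nlinarith [hp (i+1)]
      have := Real.exp_le_one_iff.mpr this; linarith
    have hS1head : ∑ i ∈ Finset.range N, phiF α y1 ((i:ℝ)+1) ≤ (N:ℝ) := by
      calc ∑ i ∈ Finset.range N, phiF α y1 ((i:ℝ)+1)
          ≤ ∑ _i ∈ Finset.range N, (1:ℝ) := Finset.sum_le_sum (fun i _ => phiF_le_one)
        _ = (N:ℝ) := by simp
    have htail : ∑' i : ℕ, phiF α y1 ((i:ℝ)+(N:ℝ)+1)
        ≤ ∑' i : ℕ, (1 - Real.exp (-(p (i+N+1)) * x)) := by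
      have hsa : Summable (fun i : ℕ => 1 - Real.exp (-(p (i+N+1)) * x)) :=
        (summable_nat_add_iff (f := fun i => 1 - Real.exp (-(p (i+1)) * x)) N).mpr hsumT
      have hsb : Summable (fun i : ℕ => phiF α y1 ((i:ℝ)+(N:ℝ)+1)) := by
        have := (summable_nat_add_iff (f := fun i : ℕ => phiF α y1 ((i:ℝ)+1)) N).mpr hsumS1
        apply this.congr
        intro i; push_cast; ring_nf
      apply Summable.tsum_le_tsum (fun i => ?_) hsb hsa
      have h := (hcomp (i+N) (by omega)).1
      push_cast at h ⊢
      convert h using 3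
    have hsplit1 := (Summable.sum_add_tsum_nat_add N hsumS1).symm
    have hcg : ∑' i : ℕ, phiF α y1 (((i+N:ℕ):ℝ)+1) = ∑' i : ℕ, phiF α y1 ((i:ℝ)+(N:ℝ)+1) := by
      apply tsum_congr; intro i; push_cast; ring_nf
    have hTsplit : T = ∑ i ∈ Finset.range N, (1 - Real.exp (-(p (i+1)) * x))
        + ∑' i : ℕ, (1 - Real.exp (-(p (i+N+1)) * x)) := by
      rw [hT, ← hsplit]
    have hS1 := sum_lower hα hy1pos
    linarith
  -- convert y powers
  have hy2pow : y2 ^ (1/α) = ((1+ε)*c) ^ (1/α) * xβ := by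
    rw [hy2, Real.mul_rpow (by nlinarith) hxpos.le]
  have hy1pow : y1 ^ (1/α) = ((1-ε)*c) ^ (1/α) * xβ := by
    rw [hy1, Real.mul_rpow (by nlinarith) hxpos.le]
  rw [Real.dist_eq, abs_sub_lt_iff]
  have hIIpos := II_pos hα
  constructor
  · rw [sub_lt_iff_lt_add, div_lt_iff₀ hxβpos]
    have h1 : ((1+ε)*c) ^ (1/α) * II α * xβ ≤ (L + η/2) * xβ := by nlinarith
    calc T ≤ (N:ℝ) + y2 ^ (1/α) * II α := hup
      _ = (N:ℝ) + ((1+ε)*c) ^ (1/α) * II α * xβ := by rw [hy2pow]; ring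
      _ < (η/2) * xβ + (L + η/2) * xβ := by nlinarith
      _ = (η + L) * xβ := by ring
  · rw [sub_lt_comm, lt_div_iff₀ hxβpos]
    have h1 : (L - η/2) * xβ ≤ ((1-ε)*c) ^ (1/α) * II α * xβ := by nlinarith
    calc (L - η) * xβ = (L - η/2) * xβ - (η/2) * xβ := by ring
      _ < ((1-ε)*c) ^ (1/α) * II α * xβ - ((N:ℝ) + 1) := by nlinarith
      _ = y1 ^ (1/α) * II α - 1 - (N:ℝ) := by rw [hy1pow]; ring
      _ ≤ T := hdown
end main2

/-- Scaling property: for `p i ~ c/i^α` with `0 ≤ p i < 1`,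
`∑_i (1 - e^{-(1+δ) p_i x}) / ∑_i (1 - e^{-p_i x}) → (1+δ)^{1/α}` as `x → ∞`. -/
theorem stmt15 (c α δ : ℝ) (hc : 0 < c) (hα : 1 < α) (hδ : 0 < δ)
    (p : ℕ → ℝ) (hp : ∀ i, 0 ≤ p i ∧ p i < 1)
    (hasymp : Tendsto (fun i : ℕ => p i * (i : ℝ) ^ α) atTop (nhds c)) :
    Tendsto (fun x : ℝ =>
        (∑' i : ℕ, (1 - Real.exp (-(1 + δ) * p (i + 1) * x))) /
          (∑' i : ℕ, (1 - Real.exp (-(p (i + 1)) * x))))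
      atTop (nhds ((1 + δ) ^ (1 / α))) := by
  have hp0 : ∀ i, 0 ≤ p i := fun i => (hp i).1
  set A : ℝ := c ^ (1/α) * II α with hA_def
  have hA : 0 < A := mul_pos (Real.rpow_pos_of_pos hc _) (II_pos hα)
  have h1 := main_asymp hc hα hp0 hasymp
  have hmul : Tendsto (fun x : ℝ => (1+δ)*x) atTop atTop := by
    apply Tendsto.const_mul_atTop (by linarith) tendsto_id
  have h2 : Tendsto (fun x : ℝ =>
      (∑' i : ℕ, (1 - Real.exp (-(p (i+1)) * ((1+δ)*x)))) / ((1+δ)*x) ^ (1/α))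
      atTop (nhds A) := h1.comp hmul
  have h3 := (h2.div h1 hA.ne').mul_const ((1+δ) ^ (1/α))
  rw [div_self hA.ne', one_mul] at h3
  apply h3.congr'
  have hTpos := h1.eventually (eventually_gt_nhds (show A/2 < A by linarith))
  filter_upwards [hTpos, eventually_gt_atTop 0] with x hTx hx
  have hxβ : (0:ℝ) < x ^ (1/α) := Real.rpow_pos_of_pos hx _
  have hT0 : 0 < ∑' i : ℕ, (1 - Real.exp (-(p (i+1)) * x)) := by
    have h5 : 0 < A/2 := by linarith
    have := mul_pos (lt_trans h5 hTx) hxβ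
    rwa [div_mul_cancel₀] at this
    exact hxβ.ne'
  have hnum : (∑' i : ℕ, (1 - Real.exp (-(p (i+1)) * ((1+δ)*x))))
      = ∑' i : ℕ, (1 - Real.exp (-(1 + δ) * p (i + 1) * x)) := by
    apply tsum_congr; intro i
    congr 2; ring
  have hpow : ((1+δ)*x) ^ (1/α) = (1+δ) ^ (1/α) * x ^ (1/α) :=
    Real.mul_rpow (by linarith) hx.le
  have hdpos : (0:ℝ) < (1+δ) ^ (1/α) := Real.rpow_pos_of_pos (by linarith) _
  simp only [Pi.div_apply]
  rw [hnum, hpow]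
  set Nm : ℝ := ∑' i : ℕ, (1 - Real.exp (-(1 + δ) * p (i + 1) * x)) with hNm
  set D : ℝ := ∑' i : ℕ, (1 - Real.exp (-(p (i + 1)) * x)) with hD
  field_simp
end
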